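/- arXiv:2603.19927 — 6 statements merged into one kernel-verified Lean document; each statement's English description precedes it below -/
import Mathlib

section
/- For all natural numbers n, m ≥ 1 and every real number x, tr(A_x^n · B_x^m) = 2^(m-1)·x^m + 2^(n-1)·x^n + 2^(n+m-2)·x^(n+m). -/
open Matrix

/-- The matrix `A_x`. -/
def Amat (x : ℝ) : Matrix (Fin 3) (Fin 3) ℝ :=
  !![1, 0, 0; 0, x, -x; 0, -x, x]

/-- The matrix `B_x`. -/
def Bmat (x : ℝ) : Matrix (Fin 3) (Fin 3) ℝ :=
  !![x, -x, 0; -x, x, 0; 0, 0, 1]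

lemma Apow (x : ℝ) : ∀ n : ℕ, 1 ≤ n →
    Amat x ^ n = !![1, 0, 0; 0, 2 ^ (n - 1) * x ^ n, -(2 ^ (n - 1) * x ^ n);
      0, -(2 ^ (n - 1) * x ^ n), 2 ^ (n - 1) * x ^ n] := by
  intro n
  induction n with
  | zero => omega
  | succ k ih =>
    intro _
    rcases Nat.eq_zero_or_pos k with hk | hk
    · subst hk
      simp [Amat]
    · rw [pow_succ, ih hk]
      have h2 : (2:ℝ) ^ k = 2 ^ (k - 1) * 2 := by
        rw [← pow_succ, Nat.sub_add_cancel hk]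
      ext i j
      fin_cases i <;> fin_cases j <;>
        simp [Amat, Matrix.mul_apply, Fin.sum_univ_three, Matrix.vecHead,
          Matrix.vecTail, h2, pow_succ] <;> ring

lemma Bpow (x : ℝ) : ∀ m : ℕ, 1 ≤ m →
    Bmat x ^ m = !![2 ^ (m - 1) * x ^ m, -(2 ^ (m - 1) * x ^ m), 0;
      -(2 ^ (m - 1) * x ^ m), 2 ^ (m - 1) * x ^ m, 0; 0, 0, 1] := by
  intro m
  induction m with
  | zero => omega
  | succ k ih =>
    intro _
    rcases Nat.eq_zero_or_pos k with hk | hk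
    · subst hk
      simp [Bmat]
    · rw [pow_succ, ih hk]
      have h2 : (2:ℝ) ^ k = 2 ^ (k - 1) * 2 := by
        rw [← pow_succ, Nat.sub_add_cancel hk]
      ext i j
      fin_cases i <;> fin_cases j <;>
        simp [Bmat, Matrix.mul_apply, Fin.sum_univ_three, Matrix.vecHead,
          Matrix.vecTail, h2, pow_succ] <;> ring

theorem stmt_2 : ∀ n m : ℕ, 1 ≤ n → 1 ≤ m → ∀ x : ℝ,
    (Amat x ^ n * Bmat x ^ m).trace =
      2 ^ (m - 1) * x ^ m + 2 ^ (n - 1) * x ^ n + 2 ^ (n + m - 2) * x ^ (n + m) := by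
  intro n m hn hm x
  rw [Apow x n hn, Bpow x m hm]
  simp [Matrix.trace, Matrix.diag, Matrix.mul_apply, Fin.sum_univ_three]
  rw [show (2:ℝ) ^ (n + m - 2) = 2 ^ (n - 1) * 2 ^ (m - 1) from by
      rw [← pow_add]; congr 1; omega,
    show x ^ (n + m) = x ^ n * x ^ m from by rw [pow_add]]
  ring
end

section
/- For every word w : List Bool, every coefficient of the word trace polynomial T(w) ∈ ℝ[X] is nonnegative. -/
open Matrix Polynomial

/-- The polynomial matrix `𝔸`. -/
noncomputable def Apoly : Matrix (Fin 3) (Fin 3) (Polynomial ℝ) :=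
  !![1, 0, 0; 0, X, -X; 0, -X, X]

/-- The polynomial matrix `𝔹`. -/
noncomputable def Bpoly : Matrix (Fin 3) (Fin 3) (Polynomial ℝ) :=
  !![X, -X, 0; -X, X, 0; 0, 0, 1]

/-- The word trace polynomial `T(w)`. -/
noncomputable def T (w : List Bool) : Polynomial ℝ :=
  ((w.map fun b => if b = true then Apoly else Bpoly).prod).trace

noncomputable def Apos : Matrix (Fin 3) (Fin 3) (Polynomial ℝ) :=
  !![1, 0, 0; 0, X, X; 0, X, X]

noncomputable def Bpos : Matrix (Fin 3) (Fin 3) (Polynomial ℝ) :=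
  !![X, X, 0; X, X, 0; 0, 0, 1]

noncomputable def Dmat : Matrix (Fin 3) (Fin 3) (Polynomial ℝ) :=
  !![1, 0, 0; 0, -1, 0; 0, 0, 1]

lemma DD : Dmat * Dmat = 1 := by
  ext i j
  fin_cases i <;> fin_cases j <;>
    simp [Dmat, Matrix.mul_apply, Fin.sum_univ_three, Matrix.one_apply, Matrix.vecHead, Matrix.vecTail]

lemma hA : Apoly = Dmat * Apos * Dmat := by
  ext i j
  fin_cases i <;> fin_cases j <;>
    simp [Dmat, Apoly, Apos, Matrix.mul_apply, Fin.sum_univ_three, Matrix.vecHead, Matrix.vecTail, Function.comp]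

lemma hB : Bpoly = Dmat * Bpos * Dmat := by
  ext i j
  fin_cases i <;> fin_cases j <;>
    simp [Dmat, Bpoly, Bpos, Matrix.mul_apply, Fin.sum_univ_three, Matrix.vecHead, Matrix.vecTail, Function.comp]

def Pnn (p : Polynomial ℝ) : Prop := ∀ d : ℕ, 0 ≤ p.coeff d

lemma Pnn_add {p q : Polynomial ℝ} (hp : Pnn p) (hq : Pnn q) : Pnn (p + q) := by
  intro d
  simp only [Polynomial.coeff_add]
  exact add_nonneg (hp d) (hq d)

lemma Pnn_mul {p q : Polynomial ℝ} (hp : Pnn p) (hq : Pnn q) : Pnn (p * q) := by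
  intro d
  rw [Polynomial.coeff_mul]
  exact Finset.sum_nonneg fun x _ => mul_nonneg (hp x.1) (hq x.2)

lemma Pnn_zero : Pnn (0 : Polynomial ℝ) := fun d => by simp

lemma Pnn_one : Pnn (1 : Polynomial ℝ) := fun d => by
  rw [Polynomial.coeff_one]
  positivity

lemma Pnn_X : Pnn (X : Polynomial ℝ) := fun d => by
  rw [Polynomial.coeff_X]
  positivity

lemma Pnn_entries (b : Bool) (i j : Fin 3) :
    Pnn ((if b = true then Apos else Bpos) i j) := by
  cases b <;> fin_cases i <;> fin_cases j <;>
    simp [Apos, Bpos, Matrix.vecHead, Matrix.vecTail, Function.comp, Pnn_zero, Pnn_one, Pnn_X]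

lemma Pnn_prod (w : List Bool) (i j : Fin 3) :
    Pnn (((w.map fun b => if b = true then Apos else Bpos).prod) i j) := by
  induction w generalizing i j with
  | nil =>
      simp only [List.map_nil, List.prod_nil]
      by_cases h : i = j <;> simp [Matrix.one_apply, h, Pnn_zero, Pnn_one]
  | cons b w ih =>
      simp only [List.map_cons, List.prod_cons, Matrix.mul_apply]
      intro d
      rw [Polynomial.finset_sum_coeff]
      refine Finset.sum_nonneg fun k _ => ?_
      exact Pnn_mul (Pnn_entries b i k) (ih k j) d

lemma prod_conj (w : List Bool) :
    (w.map fun b => if b = true then Apoly else Bpoly).prod =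
      Dmat * (w.map fun b => if b = true then Apos else Bpos).prod * Dmat := by
  induction w with
  | nil => simp [DD]
  | cons b w ih =>
      simp only [List.map_cons, List.prod_cons, ih]
      have hb : (if b = true then Apoly else Bpoly) =
          Dmat * (if b = true then Apos else Bpos) * Dmat := by
        cases b <;> simp [hA, hB]
      rw [hb]
      have : Dmat * (if b = true then Apos else Bpos) * Dmat *
          (Dmat * (w.map fun b => if b = true then Apos else Bpos).prod * Dmat)
          = Dmat * ((if b = true then Apos else Bpos) * (Dmat * Dmat) *
            (w.map fun b => if b = true then Apos else Bpos).prod) * Dmat := by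
        noncomm_ring
      rw [this, DD, mul_one]

theorem stmt_4 : ∀ w : List Bool, ∀ d : ℕ, 0 ≤ (T w).coeff d := by
  intro w d
  have : T w = ((w.map fun b => if b = true then Apos else Bpos).prod).trace := by
    unfold T
    rw [prod_conj, Matrix.trace_mul_cycle, DD, Matrix.one_mul]
  rw [this, Matrix.trace, Polynomial.finset_sum_coeff]
  exact Finset.sum_nonneg fun i _ => Pnn_prod w i i d
end

section
/- Let r ≥ 1 and let a, b : Fin r → ℕ with a_i ≥ 1 and b_i ≥ 1 for all i. Let w : List Bool be the concatenation, over i = 0, 1, …, r−1 in order, of a_i copies of true followed by b_i copies of false (the word A^{a_1}B^{b_1}⋯A^{a_r}B^{b_r}). Then T(w) ≠ 0, and the least degree d such that the coefficient of X^d in T(w) is nonzero equals the minimum, over all subsets S ⊆ Fin r, of (∑_{i ∉ S} a_i) + (∑_{i ∈ Γ(S)} b_i), where Γ(S) := { i ∈ Fin r : i ∈ S or i+1 ∈ S }, with i+1 taken modulo r. -/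
open Matrix Polynomial

noncomputable def g (k : ℕ) : Polynomial ℝ := C ((2:ℝ)^(k-1)) * X^k

lemma C_two : (C (2:ℝ) : Polynomial ℝ) = 2 := by
  exact map_ofNat C 2

lemma g_succ (k : ℕ) (hk : 1 ≤ k) : g (k+1) = 2 * g k * X := by
  obtain ⟨j, rfl⟩ := Nat.exists_eq_add_of_le hk
  simp only [g, Nat.add_sub_cancel_left, Nat.succ_sub_one, Nat.add_comm 1 j]
  rw [pow_succ, pow_succ, C_mul, C_two]
  ring

lemma Apow_s5 (m : ℕ) (hm : 1 ≤ m) :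
    Apoly ^ m = !![1,0,0;0,g m,-(g m);0,-(g m),g m] := by
  obtain ⟨k, rfl⟩ := Nat.exists_eq_add_of_le hm
  induction k with
  | zero => simp [g, Apoly, pow_one]
  | succ k ih =>
    have h1 : 1 + (k+1) = (1+k) + 1 := by ring
    rw [h1, pow_succ, ih (by omega), Apoly, mul_fin_three, g_succ _ (by omega)]
    refine Matrix.ext fun i j => ?_
    fin_cases i <;> fin_cases j <;> simp <;> ring

lemma Bpow_s5 (n : ℕ) (hn : 1 ≤ n) :
    Bpoly ^ n = !![g n,-(g n),0;-(g n),g n,0;0,0,1] := by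
  obtain ⟨k, rfl⟩ := Nat.exists_eq_add_of_le hn
  induction k with
  | zero => simp [g, Bpoly, pow_one]
  | succ k ih =>
    have h1 : 1 + (k+1) = (1+k) + 1 := by ring
    rw [h1, pow_succ, ih (by omega), Bpoly, mul_fin_three, g_succ _ (by omega)]
    refine Matrix.ext fun i j => ?_
    fin_cases i <;> fin_cases j <;> simp <;> ring
noncomputable def Lmat (m n : ℕ) : Matrix (Fin 2) (Fin 2) (Polynomial ℝ) :=
  !![g n, g n; g m * g n, g m * g n + g m]
noncomputable def R3 : Matrix (Fin 3) (Fin 2) (Polynomial ℝ) := !![1,0;0,-1;0,1]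
noncomputable def C3 : Matrix (Fin 2) (Fin 3) (Polynomial ℝ) := !![1,-1,-1;0,0,1]

lemma C3_mul_R3 : C3 * R3 = 1 := by
  refine Matrix.ext fun i j => ?_
  fin_cases i <;> fin_cases j <;>
    simp [C3, R3, Matrix.mul_apply, Fin.sum_univ_three, Matrix.one_apply, Matrix.vecHead, Matrix.vecTail]

lemma base_identity (m n : ℕ) :
    !![1,0,0;0,g m,-(g m);0,-(g m),g m] * !![g n,-(g n),0;-(g n),g n,0;0,0,1]
      = R3 * Lmat m n * C3 := by
  refine Matrix.ext fun i j => ?_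
  fin_cases i <;> fin_cases j <;>
    simp [R3, C3, Lmat, Matrix.mul_apply, Fin.sum_univ_three, Fin.sum_univ_two] <;>
    ring

lemma blocks (l : List (ℕ × ℕ)) (hl : l ≠ []) (h : ∀ p ∈ l, 1 ≤ p.1 ∧ 1 ≤ p.2) :
    (l.map fun p => Apoly^p.1 * Bpoly^p.2).prod
      = R3 * (l.map fun p => Lmat p.1 p.2).prod * C3 := by
  induction l with
  | nil => exact absurd rfl hl
  | cons p l ih =>
    rcases eq_or_ne l [] with rfl | hl'
    · obtain ⟨h1, h2⟩ := h p (by simp)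
      simp only [List.map_cons, List.map_nil, List.prod_cons, List.prod_nil, mul_one]
      rw [Apow_s5 _ h1, Bpow_s5 _ h2, base_identity]
    · obtain ⟨h1, h2⟩ := h p (by simp)
      simp only [List.map_cons, List.prod_cons]
      rw [Apow_s5 _ h1, Bpow_s5 _ h2, base_identity, ih hl' (fun q hq => h q (by simp [hq]))]
      rw [show ∀ M N : Matrix (Fin 2) (Fin 2) (Polynomial ℝ),
        R3 * M * C3 * (R3 * N * C3) = R3 * (M * ((C3 * R3) * N)) * C3 from
        fun M N => by simp only [Matrix.mul_assoc], C3_mul_R3, one_mul]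

lemma T_eq (r : ℕ) (hr : 1 ≤ r) (a b : Fin r → ℕ)
    (ha : ∀ i, 1 ≤ a i) (hb : ∀ i, 1 ≤ b i)
    (w : List Bool)
    (hw : w = (List.ofFn fun i : Fin r =>
      List.replicate (a i) true ++ List.replicate (b i) false).flatten) :
    T w = Matrix.trace ((List.ofFn fun i : Fin r => Lmat (a i) (b i)).prod) := by
  subst hw
  unfold T
  have h1 : ((List.ofFn fun i : Fin r =>
      List.replicate (a i) true ++ List.replicate (b i) false).flatten.map
        fun b => if b = true then Apoly else Bpoly).prod
      = (List.ofFn fun i : Fin r => Apoly ^ (a i) * Bpoly ^ (b i)).prod := by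
    rw [List.map_flatten, List.map_ofFn, List.prod_flatten, List.map_ofFn]
    refine congrArg _ (congrArg List.ofFn (funext fun i => ?_))
    simp [List.map_append, List.map_replicate, List.prod_append, List.prod_replicate,
      Function.comp]
  rw [h1]
  have h2 : (List.ofFn fun i : Fin r => Apoly ^ (a i) * Bpoly ^ (b i))
      = (List.ofFn fun i : Fin r => ((a i), (b i))).map fun p => Apoly^p.1 * Bpoly^p.2 := by
    rw [List.map_ofFn]; rfl
  have h3 : (List.ofFn fun i : Fin r => Lmat (a i) (b i))
      = (List.ofFn fun i : Fin r => ((a i), (b i))).map fun p => Lmat p.1 p.2 := by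
    rw [List.map_ofFn]; rfl
  rw [h2, h3, blocks _ (by simp [List.ofFn_eq_nil_iff]; omega) ?_]
  · rw [Matrix.trace_mul_cycle, C3_mul_R3, one_mul]
  · intro p hp
    simp only [List.mem_ofFn] at hp
    obtain ⟨i, rfl⟩ := hp
    exact ⟨ha i, hb i⟩



section PathExpand
variable {R : Type*} [CommRing R]

lemma entry_expand : ∀ (r : ℕ) (f : Fin r → Matrix (Fin 2) (Fin 2) R) (i j : Fin 2),
    (List.ofFn f).prod i j =
      ∑ p : Fin (r+1) → Fin 2,
        if p 0 = i ∧ p (Fin.last r) = j then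
          ∏ k : Fin r, f k (p k.castSucc) (p k.succ) else 0 := by
  intro r
  induction r with
  | zero =>
    intro f i j
    rw [← Equiv.sum_comp (Equiv.funUnique (Fin 1) (Fin 2)).symm]
    simp only [List.ofFn_zero, List.prod_nil, Matrix.one_apply, Equiv.funUnique,
      Equiv.symm, Equiv.coe_fn_mk, Fin.last, Finset.univ_unique, Finset.prod_empty]
    rw [Fin.sum_univ_two]
    fin_cases i <;> fin_cases j <;> simp
  | succ r ih =>
    intro f i j
    rw [List.ofFn_succ, List.prod_cons, Matrix.mul_apply]
    rw [← Equiv.sum_comp (Fin.consEquiv (fun _ : Fin (r+2) => Fin 2))]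
    rw [Fintype.sum_prod_type]
    have key : ∀ (x : Fin 2) (q : Fin (r+1) → Fin 2),
        (if (Fin.consEquiv (fun _ : Fin (r+2) => Fin 2)) (x, q) 0 = i ∧
            (Fin.consEquiv (fun _ : Fin (r+2) => Fin 2)) (x, q) (Fin.last (r+1)) = j then
          ∏ k : Fin (r+1), f k ((Fin.consEquiv (fun _ : Fin (r+2) => Fin 2)) (x, q) k.castSucc)
            ((Fin.consEquiv (fun _ : Fin (r+2) => Fin 2)) (x, q) k.succ) else 0)
        = if x = i then
            (if q (Fin.last r) = j then
              f 0 i (q 0) * ∏ k : Fin r, f k.succ (q k.castSucc) (q k.succ)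
             else 0)
          else 0 := by
      intro x q
      have h0 : (Fin.consEquiv (fun _ : Fin (r+2) => Fin 2)) (x, q) 0 = x := rfl
      have hlast : (Fin.consEquiv (fun _ : Fin (r+2) => Fin 2)) (x, q) (Fin.last (r+1)) =
          q (Fin.last r) := by
        simp only [Fin.consEquiv, Equiv.coe_fn_mk]
        rw [← Fin.succ_last, Fin.cons_succ]
      have hprod : (∏ k : Fin (r+1), f k
            ((Fin.consEquiv (fun _ : Fin (r+2) => Fin 2)) (x, q) k.castSucc)
            ((Fin.consEquiv (fun _ : Fin (r+2) => Fin 2)) (x, q) k.succ))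
          = f 0 x (q 0) * ∏ k : Fin r, f k.succ (q k.castSucc) (q k.succ) := by
        rw [Fin.prod_univ_succ]
        refine congrArg₂ _ (by simp [Fin.consEquiv]) ?_
        refine Finset.prod_congr rfl fun k _ => ?_
        have e1 : (Fin.consEquiv (fun _ : Fin (r+2) => Fin 2)) (x, q) (k.succ.castSucc)
            = q k.castSucc := by
          simp only [Fin.consEquiv, Equiv.coe_fn_mk]
          rw [← Fin.succ_castSucc, Fin.cons_succ]
        have e2 : (Fin.consEquiv (fun _ : Fin (r+2) => Fin 2)) (x, q) (k.succ.succ)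
            = q k.succ := by
          simp [Fin.consEquiv]
        rw [e1, e2]
      rw [h0, hlast, hprod]
      by_cases hx : x = i <;> by_cases hql : q (Fin.last r) = j <;> simp [hx, hql]
    simp only [key]
    rw [Finset.sum_comm]
    have inner : ∀ q : Fin (r+1) → Fin 2,
        (∑ x : Fin 2, if x = i then
            (if q (Fin.last r) = j then
              f 0 i (q 0) * ∏ k : Fin r, f k.succ (q k.castSucc) (q k.succ) else 0) else 0)
        = (if q (Fin.last r) = j then
              f 0 i (q 0) * ∏ k : Fin r, f k.succ (q k.castSucc) (q k.succ) else 0) := by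
      intro q
      rw [Finset.sum_ite_eq' Finset.univ i]
      simp
    simp only [inner]
    -- LHS: expand with ih
    have lhs : ∀ k : Fin 2, (List.ofFn fun m : Fin r => f m.succ).prod k j =
        ∑ q : Fin (r+1) → Fin 2, if q 0 = k ∧ q (Fin.last r) = j then
          ∏ m : Fin r, f m.succ (q m.castSucc) (q m.succ) else 0 := fun k => ih _ k j
    simp only [lhs]
    rw [Fin.sum_univ_two]
    rw [Finset.mul_sum, Finset.mul_sum, ← Finset.sum_add_distrib]
    refine Finset.sum_congr rfl fun q _ => ?_
    by_cases hl : q (Fin.last r) = j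
    · rcases eq_or_ne (q 0) 0 with h0 | h0
      · simp [h0, hl]
      · have h1 := Fin.eq_one_of_ne_zero _ h0
        simp [h1, hl]
    · simp [hl]

lemma snoc_succ_cyc {β : Type*} {r : ℕ} (q : Fin (r+1) → β) (k : Fin (r+1)) :
    Fin.snoc (α := fun _ : Fin (r+2) => β) q (q 0) k.succ = q (k + 1) := by
  rcases eq_or_ne k (Fin.last r) with rfl | hne
  · rw [Fin.succ_last]
    simp [Fin.snoc_last, Fin.last_add_one]
  · have hcast : k.succ = Fin.castSucc (k + 1) := by
      ext
      simp [Fin.val_add_one, hne]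
    rw [hcast, Fin.snoc_castSucc]

lemma trace_expand (r : ℕ) (f : Fin (r+1) → Matrix (Fin 2) (Fin 2) R) :
    Matrix.trace (List.ofFn f).prod =
      ∑ q : Fin (r+1) → Fin 2, ∏ k : Fin (r+1), f k (q k) (q (finRotate (r+1) k)) := by
  rw [Matrix.trace]
  have h1 : ∀ i : Fin 2, Matrix.diag (List.ofFn f).prod i =
      ∑ p : Fin (r+2) → Fin 2,
        if p 0 = i ∧ p (Fin.last (r+1)) = i then
          ∏ k : Fin (r+1), f k (p k.castSucc) (p k.succ) else 0 := by
    intro i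
    rw [Matrix.diag]
    exact entry_expand (r+1) f i i
  simp only [h1]
  rw [Finset.sum_comm]
  have h2 : ∀ p : Fin (r+2) → Fin 2,
      (∑ i : Fin 2, if p 0 = i ∧ p (Fin.last (r+1)) = i then
          ∏ k : Fin (r+1), f k (p k.castSucc) (p k.succ) else 0)
      = if p (Fin.last (r+1)) = p 0 then
          ∏ k : Fin (r+1), f k (p k.castSucc) (p k.succ) else 0 := by
    intro p
    rw [Fin.sum_univ_two]
    rcases eq_or_ne (p 0) 0 with h0 | h0
    · simp [h0, eq_comm]
    · have h1' := Fin.eq_one_of_ne_zero _ h0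
      simp [h1', eq_comm]
  simp only [h2]
  rw [← Equiv.sum_comp (Fin.snocEquiv (fun _ : Fin (r+2) => Fin 2)), Fintype.sum_prod_type]
  have h3 : ∀ (y : Fin 2) (q : Fin (r+1) → Fin 2),
      ((Fin.snocEquiv (fun _ : Fin (r+2) => Fin 2)) (y, q) (Fin.last (r+1)) = (Fin.snocEquiv (fun _ : Fin (r+2) => Fin 2)) (y, q) 0)
      ↔ y = q 0 := by
    intro y q
    have e0 : (0 : Fin (r+2)) = Fin.castSucc 0 := rfl
    simp only [Fin.snocEquiv, Equiv.coe_fn_mk, Fin.snoc_last, e0, Fin.snoc_castSucc]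
  rw [Finset.sum_comm]
  refine Finset.sum_congr rfl fun q _ => ?_
  have h4 : ∀ y : Fin 2,
      (if (Fin.snocEquiv (fun _ : Fin (r+2) => Fin 2)) (y, q) (Fin.last (r+1)) = (Fin.snocEquiv (fun _ : Fin (r+2) => Fin 2)) (y, q) 0 then
        ∏ k : Fin (r+1), f k ((Fin.snocEquiv (fun _ : Fin (r+2) => Fin 2)) (y, q) k.castSucc)
          ((Fin.snocEquiv (fun _ : Fin (r+2) => Fin 2)) (y, q) k.succ) else 0)
      = if y = q 0 then
          ∏ k : Fin (r+1), f k (q k) (Fin.snoc (α := fun _ : Fin (r+2) => Fin 2) q y k.succ) else 0 := by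
    intro y
    rw [if_congr (h3 y q) rfl rfl]
    rcases eq_or_ne y (q 0) with rfl | hy
    · simp only [if_pos rfl]
      refine Finset.prod_congr rfl fun k _ => ?_
      simp [Fin.snocEquiv]
    · simp [hy]
  simp only [h4]
  rw [Finset.sum_ite_eq' Finset.univ (q 0)]
  simp only [Finset.mem_univ, if_pos]
  refine Finset.prod_congr rfl fun k _ => ?_
  rw [snoc_succ_cyc q k, finRotate_succ_apply]

end PathExpand



def NP (p : Polynomial ℝ) : Prop := ∀ n, 0 ≤ p.coeff n

lemma NP_add {p q : Polynomial ℝ} (hp : NP p) (hq : NP q) : NP (p + q) := fun n => by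
  rw [Polynomial.coeff_add]; exact add_nonneg (hp n) (hq n)

lemma NP_mul {p q : Polynomial ℝ} (hp : NP p) (hq : NP q) : NP (p * q) := fun n => by
  rw [Polynomial.coeff_mul]
  exact Finset.sum_nonneg fun x _ => mul_nonneg (hp x.1) (hq x.2)

lemma NP_trailing_pos {p : Polynomial ℝ} (hp : NP p) (h0 : p ≠ 0) :
    0 < p.coeff p.natTrailingDegree := by
  have := mt Polynomial.trailingCoeff_eq_zero.mp h0
  rw [Polynomial.trailingCoeff] at this
  exact lt_of_le_of_ne (hp _) (Ne.symm this)

lemma NP_add_ntd {p q : Polynomial ℝ} (hp : NP p) (hq : NP q) (hp0 : p ≠ 0) (hq0 : q ≠ 0) :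
    p + q ≠ 0 ∧ (p + q).natTrailingDegree = min p.natTrailingDegree q.natTrailingDegree := by
  set d := min p.natTrailingDegree q.natTrailingDegree with hd
  have hcd : 0 < (p + q).coeff d := by
    rw [Polynomial.coeff_add]
    rcases min_cases p.natTrailingDegree q.natTrailingDegree with ⟨h1, h2⟩ | ⟨h1, h2⟩
    · rw [hd, h1]
      exact add_pos_of_pos_of_nonneg (NP_trailing_pos hp hp0) (hq _)
    · rw [hd, h1]
      exact add_pos_of_nonneg_of_pos (hp _) (NP_trailing_pos hq hq0)
  have hne : p + q ≠ 0 := fun h => by simp [h] at hcd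
  refine ⟨hne, le_antisymm ?_ ?_⟩
  · exact Polynomial.natTrailingDegree_le_of_ne_zero (ne_of_gt hcd)
  · refine Polynomial.le_natTrailingDegree hne fun m hm => ?_
    rw [Polynomial.coeff_add,
      Polynomial.coeff_eq_zero_of_lt_natTrailingDegree (lt_of_lt_of_le hm (min_le_left _ _)),
      Polynomial.coeff_eq_zero_of_lt_natTrailingDegree (lt_of_lt_of_le hm (min_le_right _ _)),
      add_zero]

lemma NP_sum_ntd {ι : Type*} (s : Finset ι) (hs : s.Nonempty) (f : ι → Polynomial ℝ)
    (h : ∀ i ∈ s, NP (f i) ∧ f i ≠ 0) :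
    (∑ i ∈ s, f i) ≠ 0 ∧
      (∑ i ∈ s, f i).natTrailingDegree = s.inf' hs fun i => (f i).natTrailingDegree := by
  induction s using Finset.cons_induction with
  | empty => exact absurd hs (by simp)
  | cons a s ha ih =>
    rcases s.eq_empty_or_nonempty with rfl | hs'
    · simpa using (h a (by simp)).2
    · have hstep := ih hs' (fun i hi => h i (Finset.mem_cons_of_mem hi))
      rw [Finset.sum_cons, Finset.inf'_cons]
      have hNPs : NP (∑ i ∈ s, f i) := by
        classical
        intro n
        rw [Polynomial.finset_sum_coeff]
        exact Finset.sum_nonneg fun i hi => ((h i (Finset.mem_cons_of_mem hi)).1) n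
      obtain ⟨hne, hdeg⟩ := NP_add_ntd (h a (Finset.mem_cons_self a s)).1 hNPs
        (h a (Finset.mem_cons_self a s)).2 hstep.1
      exact ⟨hne, by rw [hdeg, hstep.2]⟩

lemma NP_prod_ntd {ι : Type*} (s : Finset ι) (f : ι → Polynomial ℝ)
    (h : ∀ i ∈ s, NP (f i) ∧ f i ≠ 0) :
    NP (∏ i ∈ s, f i) ∧ (∏ i ∈ s, f i) ≠ 0 ∧
      (∏ i ∈ s, f i).natTrailingDegree = ∑ i ∈ s, (f i).natTrailingDegree := by
  induction s using Finset.cons_induction with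
  | empty =>
    refine ⟨fun n => ?_, one_ne_zero, by simp⟩
    simp only [Finset.prod_empty]
    rcases eq_or_ne n 0 with rfl | hn
    · simp
    · simp [Polynomial.coeff_one, hn]
  | cons a s ha ih =>
    obtain ⟨hNP, hne, hdeg⟩ := ih (fun i hi => h i (Finset.mem_cons_of_mem hi))
    obtain ⟨hNPa, hnea⟩ := h a (Finset.mem_cons_self a s)
    rw [Finset.prod_cons, Finset.sum_cons]
    exact ⟨NP_mul hNPa hNP, mul_ne_zero hnea hne,
      by rw [Polynomial.natTrailingDegree_mul hnea hne, hdeg]⟩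



lemma NP_g (k : ℕ) : NP (g k) := fun n => by
  rw [g, Polynomial.coeff_C_mul_X_pow]
  positivity

lemma g_ne (k : ℕ) : g k ≠ 0 := by
  intro h
  have h2 : ((0:Polynomial ℝ)).coeff k = (2:ℝ)^(k-1) := by
    rw [← h, g, Polynomial.coeff_C_mul_X_pow, if_pos rfl]
  simp only [Polynomial.coeff_zero] at h2
  exact absurd h2.symm (ne_of_gt (pow_pos two_pos _))

lemma ntd_g (k : ℕ) : (g k).natTrailingDegree = k := by
  refine le_antisymm (Polynomial.natTrailingDegree_le_of_ne_zero ?_)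
    (Polynomial.le_natTrailingDegree (g_ne k) fun m hm => ?_)
  · rw [g, Polynomial.coeff_C_mul_X_pow]
    simp only [if_pos rfl]
    exact (pow_pos (two_pos) (k-1)).ne'
  · rw [g, Polynomial.coeff_C_mul_X_pow, if_neg (by omega)]

def Dfun (m n : ℕ) (x y : Fin 2) : ℕ := if x = 0 then n else (if y = 0 then m + n else m)

lemma Lmat_entry (m n : ℕ) (x y : Fin 2) :
    NP (Lmat m n x y) ∧ Lmat m n x y ≠ 0 ∧
      (Lmat m n x y).natTrailingDegree = Dfun m n x y := by
  have hgg : NP (g m * g n) := NP_mul (NP_g m) (NP_g n)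
  have hggne : g m * g n ≠ 0 := mul_ne_zero (g_ne m) (g_ne n)
  have hggntd : (g m * g n).natTrailingDegree = m + n := by
    rw [Polynomial.natTrailingDegree_mul (g_ne m) (g_ne n), ntd_g, ntd_g]
  obtain ⟨hne11, hntd11⟩ := NP_add_ntd hgg (NP_g m) hggne (g_ne m)
  fin_cases x <;> fin_cases y <;>
    simp only [Lmat, Dfun, Matrix.cons_val', Matrix.cons_val_zero, Matrix.cons_val_one,
      Matrix.head_cons, Matrix.empty_val', Matrix.cons_val_fin_one, Matrix.head_fin_const,
      Matrix.of_apply, Fin.isValue, Fin.mk_zero, Fin.mk_one]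
  · exact ⟨NP_g n, g_ne n, by simp [ntd_g]⟩
  · exact ⟨NP_g n, g_ne n, by simp [ntd_g]⟩
  · exact ⟨hgg, hggne, by simp [hggntd]⟩
  · refine ⟨fun k => ?_, hne11, ?_⟩
    · rw [Polynomial.coeff_add]
      exact add_nonneg (hgg k) (NP_g m k)
    · rw [hntd11, hggntd, ntd_g, if_neg (by decide), if_neg (by decide)]
      omega



lemma sum_Dfun_eq (r : ℕ) (a b : Fin (r+1) → ℕ) (q : Fin (r+1) → Fin 2) :
    (∑ k, Dfun (a k) (b k) (q k) (q (finRotate (r+1) k)))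
    = (∑ i ∈ (Finset.univ.filter (fun i => q i = 0))ᶜ, a i) +
      ∑ i ∈ Finset.univ.filter (fun i =>
        i ∈ (Finset.univ.filter (fun i => q i = 0)) ∨
        finRotate (r+1) i ∈ (Finset.univ.filter (fun i => q i = 0))), b i := by
  classical
  simp only [finRotate_succ_apply]
  rw [Finset.compl_filter, Finset.sum_filter, Finset.sum_filter, ← Finset.sum_add_distrib]
  refine Finset.sum_congr rfl fun k _ => ?_
  simp only [Finset.mem_filter, Finset.mem_univ, true_and]
  rcases eq_or_ne (q k) 0 with h0 | h0
  · simp [Dfun, h0]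
  · rcases eq_or_ne (q (k + 1)) 0 with h1 | h1 <;>
      simp [Dfun, h0, h1]

lemma inf_eq (r : ℕ) (a b : Fin (r+1) → ℕ) :
    (Finset.univ.inf' Finset.univ_nonempty
      (fun q : Fin (r+1) → Fin 2 => ∑ k, Dfun (a k) (b k) (q k) (q (finRotate (r+1) k))))
    = Finset.univ.inf' ⟨(∅ : Finset (Fin (r+1))), Finset.mem_univ _⟩
        (fun S : Finset (Fin (r+1)) =>
          (∑ i ∈ Sᶜ, a i) +
            ∑ i ∈ Finset.univ.filter (fun i => i ∈ S ∨ finRotate (r+1) i ∈ S), b i) := by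
  classical
  apply le_antisymm
  · refine Finset.le_inf' _ _ fun S _ => ?_
    have h := sum_Dfun_eq r a b (fun i => if i ∈ S then 0 else 1)
    have hS : Finset.univ.filter (fun i => (if i ∈ S then (0:Fin 2) else 1) = 0) = S := by
      ext i
      by_cases hi : i ∈ S <;> simp [hi]
    rw [hS] at h
    exact le_of_le_of_eq (Finset.inf'_le _ (Finset.mem_univ _)) h
  · refine Finset.le_inf' _ _ fun q _ => ?_
    exact le_of_le_of_eq (Finset.inf'_le _ (Finset.mem_univ _)) (sum_Dfun_eq r a b q).symm


theorem stmt_5 (r : ℕ) (hr : 1 ≤ r) (a b : Fin r → ℕ)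
    (ha : ∀ i, 1 ≤ a i) (hb : ∀ i, 1 ≤ b i)
    (w : List Bool)
    (hw : w = (List.ofFn fun i : Fin r =>
      List.replicate (a i) true ++ List.replicate (b i) false).flatten) :
    T w ≠ 0 ∧
      (T w).natTrailingDegree =
        Finset.univ.inf' ⟨(∅ : Finset (Fin r)), Finset.mem_univ _⟩
          (fun S : Finset (Fin r) =>
            (∑ i ∈ Sᶜ, a i) +
              ∑ i ∈ Finset.univ.filter (fun i => i ∈ S ∨ finRotate r i ∈ S), b i) := by
  obtain ⟨r', rfl⟩ : ∃ r', r = r' + 1 := ⟨r - 1, by omega⟩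
  rw [T_eq (r'+1) hr a b ha hb w hw]
  rw [trace_expand r' (fun i => Lmat (a i) (b i))]
  have hterm : ∀ q : Fin (r'+1) → Fin 2,
      NP (∏ k, Lmat (a k) (b k) (q k) (q (finRotate (r'+1) k))) ∧
      (∏ k, Lmat (a k) (b k) (q k) (q (finRotate (r'+1) k))) ≠ 0 ∧
      (∏ k, Lmat (a k) (b k) (q k) (q (finRotate (r'+1) k))).natTrailingDegree
        = ∑ k, (Lmat (a k) (b k) (q k) (q (finRotate (r'+1) k))).natTrailingDegree :=
    fun q => NP_prod_ntd Finset.univ _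
      (fun k _ => ⟨(Lmat_entry (a k) (b k) _ _).1, (Lmat_entry (a k) (b k) _ _).2.1⟩)
  obtain ⟨hne, hdeg⟩ := NP_sum_ntd Finset.univ Finset.univ_nonempty
    (fun q : Fin (r'+1) → Fin 2 => ∏ k, Lmat (a k) (b k) (q k) (q (finRotate (r'+1) k)))
    (fun q _ => ⟨(hterm q).1, (hterm q).2.1⟩)
  refine ⟨hne, ?_⟩
  rw [hdeg]
  have hcong : (Finset.univ.inf' Finset.univ_nonempty fun q : Fin (r'+1) → Fin 2 =>
      (∏ k, Lmat (a k) (b k) (q k) (q (finRotate (r'+1) k))).natTrailingDegree)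
      = Finset.univ.inf' Finset.univ_nonempty
        (fun q : Fin (r'+1) → Fin 2 =>
          ∑ k, Dfun (a k) (b k) (q k) (q (finRotate (r'+1) k))) := by
    refine Finset.inf'_congr _ rfl fun q _ => ?_
    rw [(hterm q).2.2]
    exact Finset.sum_congr rfl fun k _ => (Lmat_entry (a k) (b k) _ _).2.2
  rw [hcong, inf_eq r' a b]
end

section
/- Let w be the word A³BAB³AB, i.e., the list [true, true, true, false, true, false, false, false, true, false]. Then the coefficients of X⁰, X¹, X², X³ in T(w) all vanish, and the coefficient of X⁴ in T(w) equals 1. -/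
open Matrix Polynomial

theorem stmt_6 :
    (T [true, true, true, false, true, false, false, false, true, false]).coeff 0 = 0 ∧
    (T [true, true, true, false, true, false, false, false, true, false]).coeff 1 = 0 ∧
    (T [true, true, true, false, true, false, false, false, true, false]).coeff 2 = 0 ∧
    (T [true, true, true, false, true, false, false, false, true, false]).coeff 3 = 0 ∧
    (T [true, true, true, false, true, false, false, false, true, false]).coeff 4 = 1 := by
  have h : T [true, true, true, false, true, false, false, false, true, false] =
      X^4 + 8*X^5 + 16*X^6 + 8*X^7 + 64*X^8 + 64*X^9 + 16*X^10 := by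
    simp only [T, List.map, List.prod, if_true, if_false, List.foldr]
    simp [Apoly, Bpoly, Matrix.mul_fin_three, Matrix.trace_fin_three_of]
    ring
  rw [h]
  norm_num [coeff_add, coeff_X_pow, coeff_ofNat_mul]
end

section
/- Let n, m ≥ 5 and let w : List Bool be any word containing exactly n entries equal to true and m entries equal to false. Then the coefficients of X⁰, X¹, X², X³ in T(w) are all zero. -/
open Matrix Polynomial

namespace Stmt8Aux

/-- Rows are the four vectors e₀=(1,0,0), u=(0,1,-1), e₂=(0,0,1), v=(1,-1,0). -/
noncomputable def U : Matrix (Fin 4) (Fin 3) (Polynomial ℝ) :=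
  !![1, 0, 0; 0, 1, -1; 0, 0, 1; 1, -1, 0]

/-- The transpose of `U`, as a literal. -/
noncomputable def Ut : Matrix (Fin 3) (Fin 4) (Polynomial ℝ) :=
  !![1, 0, 0, 1; 0, 1, 0, -1; 0, -1, 1, 0]

noncomputable def MA : Matrix (Fin 4) (Fin 4) (Polynomial ℝ) :=
  !![1, 0, 0, 0; 0, 2*X, 0, 0; 0, -X, 0, 0; 1, -X, 0, 0]

noncomputable def MB : Matrix (Fin 4) (Fin 4) (Polynomial ℝ) :=
  !![0, 0, 0, X; 0, 0, -1, -X; 0, 0, 1, 0; 0, 0, 0, 2*X]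

/-- The Gram matrix of the four vectors. -/
noncomputable def G4 : Matrix (Fin 4) (Fin 4) (Polynomial ℝ) :=
  !![1, 0, 0, 1; 0, 2, -1, -1; 0, -1, 1, 0; 1, -1, 0, 2]

noncomputable def FA : Matrix (Fin 4) (Fin 4) (Polynomial ℝ) :=
  !![1, 0, 0, 0; 0, X, 0, 0; 0, 0, 0, 0; 0, 0, 0, 0]

noncomputable def FB : Matrix (Fin 4) (Fin 4) (Polynomial ℝ) :=
  !![0, 0, 0, 0; 0, 0, 0, 0; 0, 0, 1, 0; 0, 0, 0, X]

lemma U_A : U * Apoly = MA * U := by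
  refine Matrix.ext fun p q => ?_
  fin_cases p <;> fin_cases q <;>
    simp [U, Apoly, MA, Matrix.mul_apply, Fin.sum_univ_succ,
      Matrix.vecHead, Matrix.vecTail] <;> ring

lemma U_B : U * Bpoly = MB * U := by
  refine Matrix.ext fun p q => ?_
  fin_cases p <;> fin_cases q <;>
    simp [U, Bpoly, MB, Matrix.mul_apply, Fin.sum_univ_succ,
      Matrix.vecHead, Matrix.vecTail] <;> ring

lemma UUt : U * Ut = G4 := by
  refine Matrix.ext fun p q => ?_
  fin_cases p <;> fin_cases q <;>
    simp [U, Ut, G4, Matrix.mul_apply, Fin.sum_univ_succ,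
      Matrix.vecHead, Matrix.vecTail] <;> ring

lemma baseA : Apoly = Ut * FA * U := by
  refine Matrix.ext fun p q => ?_
  fin_cases p <;> fin_cases q <;>
    simp [U, Ut, Apoly, FA, Matrix.mul_apply, Fin.sum_univ_succ,
      Matrix.vecHead, Matrix.vecTail] <;> ring

lemma baseB : Bpoly = Ut * FB * U := by
  refine Matrix.ext fun p q => ?_
  fin_cases p <;> fin_cases q <;>
    simp [U, Ut, Bpoly, FB, Matrix.mul_apply, Fin.sum_univ_succ,
      Matrix.vecHead, Matrix.vecTail] <;> ring

def ctab : Fin 4 → Fin 4 → Fin 6 → Fin 6 → ℕ :=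
  ![![
    ![![4, 4, 4, 4, 4, 4],
      ![0, 4, 4, 4, 4, 4],
      ![0, 1, 2, 3, 4, 4],
      ![0, 1, 2, 3, 4, 4],
      ![0, 1, 2, 3, 4, 4],
      ![0, 1, 2, 3, 4, 4]],
    ![![4, 4, 4, 4, 4, 4],
      ![4, 4, 4, 4, 4, 4],
      ![4, 2, 3, 4, 4, 4],
      ![4, 2, 3, 3, 3, 3],
      ![4, 2, 3, 3, 3, 3],
      ![4, 2, 3, 3, 3, 3]],
    ![![4, 4, 4, 4, 4, 4],
      ![4, 4, 4, 4, 4, 4],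
      ![4, 4, 2, 2, 2, 2],
      ![4, 4, 2, 2, 2, 2],
      ![4, 4, 2, 2, 2, 2],
      ![4, 4, 2, 2, 2, 2]],
    ![![4, 4, 4, 4, 4, 4],
      ![4, 1, 2, 3, 4, 4],
      ![4, 1, 2, 3, 4, 4],
      ![4, 1, 2, 3, 4, 4],
      ![4, 1, 2, 3, 4, 4],
      ![4, 1, 2, 3, 4, 4]]],
  ![
    ![![4, 4, 4, 4, 4, 4],
      ![4, 4, 4, 4, 4, 4],
      ![4, 2, 3, 4, 4, 4],
      ![4, 2, 3, 3, 3, 3],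
      ![4, 2, 3, 3, 3, 3],
      ![4, 2, 3, 3, 3, 3]],
    ![![4, 4, 4, 4, 4, 4],
      ![1, 4, 4, 4, 4, 4],
      ![2, 2, 2, 2, 2, 2],
      ![3, 3, 3, 3, 3, 3],
      ![4, 4, 4, 4, 4, 4],
      ![4, 4, 4, 4, 4, 4]],
    ![![4, 4, 4, 4, 4, 4],
      ![4, 1, 1, 1, 1, 1],
      ![4, 2, 2, 2, 2, 2],
      ![4, 3, 3, 3, 3, 3],
      ![4, 4, 4, 4, 4, 4],
      ![4, 4, 4, 4, 4, 4]],
    ![![4, 4, 4, 4, 4, 4],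
      ![4, 2, 3, 4, 4, 4],
      ![4, 3, 3, 3, 3, 3],
      ![4, 4, 3, 4, 4, 4],
      ![4, 4, 3, 4, 4, 4],
      ![4, 4, 3, 4, 4, 4]]],
  ![
    ![![4, 4, 4, 4, 4, 4],
      ![4, 4, 4, 4, 4, 4],
      ![4, 4, 2, 2, 2, 2],
      ![4, 4, 2, 2, 2, 2],
      ![4, 4, 2, 2, 2, 2],
      ![4, 4, 2, 2, 2, 2]],
    ![![4, 4, 4, 4, 4, 4],
      ![4, 1, 1, 1, 1, 1],
      ![4, 2, 2, 2, 2, 2],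
      ![4, 3, 3, 3, 3, 3],
      ![4, 4, 4, 4, 4, 4],
      ![4, 4, 4, 4, 4, 4]],
    ![![4, 0, 0, 0, 0, 0],
      ![4, 4, 1, 1, 1, 1],
      ![4, 4, 2, 2, 2, 2],
      ![4, 4, 3, 3, 3, 3],
      ![4, 4, 4, 4, 4, 4],
      ![4, 4, 4, 4, 4, 4]],
    ![![4, 4, 4, 4, 4, 4],
      ![4, 4, 2, 2, 2, 2],
      ![4, 4, 3, 3, 3, 3],
      ![4, 4, 4, 3, 3, 3],
      ![4, 4, 4, 3, 3, 3],
      ![4, 4, 4, 3, 3, 3]]],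
  ![
    ![![4, 4, 4, 4, 4, 4],
      ![4, 1, 2, 3, 4, 4],
      ![4, 1, 2, 3, 4, 4],
      ![4, 1, 2, 3, 4, 4],
      ![4, 1, 2, 3, 4, 4],
      ![4, 1, 2, 3, 4, 4]],
    ![![4, 4, 4, 4, 4, 4],
      ![4, 2, 3, 4, 4, 4],
      ![4, 3, 3, 3, 3, 3],
      ![4, 4, 3, 4, 4, 4],
      ![4, 4, 3, 4, 4, 4],
      ![4, 4, 3, 4, 4, 4]],
    ![![4, 4, 4, 4, 4, 4],
      ![4, 4, 2, 2, 2, 2],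
      ![4, 4, 3, 3, 3, 3],
      ![4, 4, 4, 3, 3, 3],
      ![4, 4, 4, 3, 3, 3],
      ![4, 4, 4, 3, 3, 3]],
    ![![4, 1, 2, 3, 4, 4],
      ![4, 4, 2, 3, 4, 4],
      ![4, 4, 2, 3, 4, 4],
      ![4, 4, 2, 3, 4, 4],
      ![4, 4, 2, 3, 4, 4],
      ![4, 4, 2, 3, 4, 4]]]]

def capS (x : Fin 6) : Fin 6 := ⟨min (x.1 + 1) 5, by omega⟩

def capN (a : ℕ) : Fin 6 := ⟨min a 5, by omega⟩

def cc (i j : Fin 4) (a b : ℕ) : ℕ := ctab i j (capN a) (capN b)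

lemma capN_succ (a : ℕ) : capN (a + 1) = capS (capN a) := by
  simp only [capN, capS, Fin.mk.injEq]
  omega

lemma tabA : ∀ (i : Fin 4) (x y : Fin 6),
    ctab i 0 (capS x) y ≤ ctab i 0 x y ∧
    ctab i 0 (capS x) y ≤ ctab i 3 x y ∧
    ctab i 1 (capS x) y ≤ ctab i 1 x y + 1 ∧
    ctab i 1 (capS x) y ≤ ctab i 2 x y + 1 ∧
    ctab i 1 (capS x) y ≤ ctab i 3 x y + 1 := by decide

lemma tabB : ∀ (i : Fin 4) (x y : Fin 6),
    ctab i 2 x (capS y) ≤ ctab i 1 x y ∧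
    ctab i 2 x (capS y) ≤ ctab i 2 x y ∧
    ctab i 3 x (capS y) ≤ ctab i 0 x y + 1 ∧
    ctab i 3 x (capS y) ≤ ctab i 1 x y + 1 ∧
    ctab i 3 x (capS y) ≤ ctab i 3 x y + 1 := by decide

lemma ccA (i : Fin 4) (a b : ℕ) :
    cc i 0 (a+1) b ≤ cc i 0 a b ∧ cc i 0 (a+1) b ≤ cc i 3 a b ∧
    cc i 1 (a+1) b ≤ cc i 1 a b + 1 ∧ cc i 1 (a+1) b ≤ cc i 2 a b + 1 ∧
    cc i 1 (a+1) b ≤ cc i 3 a b + 1 := by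
  unfold cc
  rw [capN_succ]
  exact tabA i (capN a) (capN b)

lemma ccB (i : Fin 4) (a b : ℕ) :
    cc i 2 a (b+1) ≤ cc i 1 a b ∧ cc i 2 a (b+1) ≤ cc i 2 a b ∧
    cc i 3 a (b+1) ≤ cc i 0 a b + 1 ∧ cc i 3 a (b+1) ≤ cc i 1 a b + 1 ∧
    cc i 3 a (b+1) ≤ cc i 3 a b + 1 := by
  unfold cc
  rw [capN_succ]
  exact tabB i (capN a) (capN b)

lemma finalFact : ∀ i j : Fin 4,
    G4 i j = 0 ∨ ctab j i ⟨5, by omega⟩ ⟨5, by omega⟩ = 4 := by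
  intro i j
  fin_cases i <;> fin_cases j <;>
    first
      | (right; decide)
      | (left; norm_num [G4, Matrix.vecHead, Matrix.vecTail])

lemma entry_dvd {c d : ℕ} {p q : Polynomial ℝ} (h : X ^ d ∣ p)
    (hq : q = 0 ∨ (X ∣ q ∧ c ≤ d + 1) ∨ c ≤ d) : (X : Polynomial ℝ) ^ c ∣ p * q := by
  rcases hq with rfl | ⟨hq, hcd⟩ | hcd
  · simp
  · exact (pow_dvd_pow X hcd).trans (by rw [pow_succ]; exact mul_dvd_mul h hq)
  · exact (((pow_dvd_pow X hcd).trans h).trans (dvd_mul_right p q))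

lemma main (w : List Bool) (hw : w ≠ []) :
    ∃ F : Matrix (Fin 4) (Fin 4) (Polynomial ℝ),
      ((w.map fun b => if b = true then Apoly else Bpoly).prod) = Ut * F * U ∧
      ∀ i j, X ^ cc i j (w.count true) (w.count false) ∣ F i j := by
  have hXn : (X : Polynomial ℝ) ∣ -X := (dvd_neg).mpr dvd_rfl
  have hX2 : (X : Polynomial ℝ) ∣ 2 * X := dvd_mul_left X 2
  induction w using List.reverseRecOn with
  | nil => exact absurd rfl hw
  | append_singleton w l ih =>
    rcases eq_or_ne w [] with rfl | hw'
    · cases l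
      · have hB1 : (X : Polynomial ℝ) ^ cc 2 2 0 1 ∣ 1 := by
          rw [show cc 2 2 0 1 = 0 from by decide, pow_zero]
        have hB2 : (X : Polynomial ℝ) ^ cc 3 3 0 1 ∣ X := by
          rw [show cc 3 3 0 1 = 1 from by decide, pow_one]
        refine ⟨FB, by simpa using baseB, ?_⟩
        intro i j
        fin_cases i <;> fin_cases j <;>
          first
            | exact dvd_zero _
            | exact hB1
            | exact hB2
      · have hA1 : (X : Polynomial ℝ) ^ cc 0 0 1 0 ∣ 1 := by
          rw [show cc 0 0 1 0 = 0 from by decide, pow_zero]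
        have hA2 : (X : Polynomial ℝ) ^ cc 1 1 1 0 ∣ X := by
          rw [show cc 1 1 1 0 = 1 from by decide, pow_one]
        refine ⟨FA, by simpa using baseA, ?_⟩
        intro i j
        fin_cases i <;> fin_cases j <;>
          first
            | exact dvd_zero _
            | exact hA1
            | exact hA2
    · obtain ⟨F, hF, hdvd⟩ := ih hw'
      cases l
      · -- append a B letter
        have hct : (w ++ [false]).count true = w.count true := by
          simp [List.count_append]
        have hcf : (w ++ [false]).count false = w.count false + 1 := by
          simp [List.count_append]
        refine ⟨F * MB, ?_, ?_⟩
        · rw [List.map_append, List.prod_append, List.map_singleton, List.prod_singleton,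
            if_neg (by simp), hF, Matrix.mul_assoc, U_B, ← Matrix.mul_assoc,
            ← Matrix.mul_assoc]
        · intro i j
          rw [hct, hcf]
          set a := w.count true with ha
          set b := w.count false with hb
          rw [Matrix.mul_apply]
          refine Finset.dvd_sum fun k _ => ?_
          fin_cases j <;> fin_cases k
          exacts
            [entry_dvd (hdvd i 0) (Or.inl rfl),
             entry_dvd (hdvd i 1) (Or.inl rfl),
             entry_dvd (hdvd i 2) (Or.inl rfl),
             entry_dvd (hdvd i 3) (Or.inl rfl),
             entry_dvd (hdvd i 0) (Or.inl rfl),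
             entry_dvd (hdvd i 1) (Or.inl rfl),
             entry_dvd (hdvd i 2) (Or.inl rfl),
             entry_dvd (hdvd i 3) (Or.inl rfl),
             entry_dvd (hdvd i 0) (Or.inl rfl),
             entry_dvd (hdvd i 1) (Or.inr (Or.inr (ccB i a b).1)),
             entry_dvd (hdvd i 2) (Or.inr (Or.inr (ccB i a b).2.1)),
             entry_dvd (hdvd i 3) (Or.inl rfl),
             entry_dvd (hdvd i 0) (Or.inr (Or.inl ⟨dvd_rfl, (ccB i a b).2.2.1⟩)),
             entry_dvd (hdvd i 1) (Or.inr (Or.inl ⟨hXn, (ccB i a b).2.2.2.1⟩)),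
             entry_dvd (hdvd i 2) (Or.inl rfl),
             entry_dvd (hdvd i 3) (Or.inr (Or.inl ⟨hX2, (ccB i a b).2.2.2.2⟩))]
      · -- append an A letter
        have hct : (w ++ [true]).count true = w.count true + 1 := by
          simp [List.count_append]
        have hcf : (w ++ [true]).count false = w.count false := by
          simp [List.count_append]
        refine ⟨F * MA, ?_, ?_⟩
        · rw [List.map_append, List.prod_append, List.map_singleton, List.prod_singleton,
            if_pos rfl, hF, Matrix.mul_assoc, U_A, ← Matrix.mul_assoc,
            ← Matrix.mul_assoc]
        · intro i j
          rw [hct, hcf]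
          set a := w.count true with ha
          set b := w.count false with hb
          rw [Matrix.mul_apply]
          refine Finset.dvd_sum fun k _ => ?_
          fin_cases j <;> fin_cases k
          exacts
            [entry_dvd (hdvd i 0) (Or.inr (Or.inr (ccA i a b).1)),
             entry_dvd (hdvd i 1) (Or.inl rfl),
             entry_dvd (hdvd i 2) (Or.inl rfl),
             entry_dvd (hdvd i 3) (Or.inr (Or.inr (ccA i a b).2.1)),
             entry_dvd (hdvd i 0) (Or.inl rfl),
             entry_dvd (hdvd i 1) (Or.inr (Or.inl ⟨hX2, (ccA i a b).2.2.1⟩)),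
             entry_dvd (hdvd i 2) (Or.inr (Or.inl ⟨hXn, (ccA i a b).2.2.2.1⟩)),
             entry_dvd (hdvd i 3) (Or.inr (Or.inl ⟨hXn, (ccA i a b).2.2.2.2⟩)),
             entry_dvd (hdvd i 0) (Or.inl rfl),
             entry_dvd (hdvd i 1) (Or.inl rfl),
             entry_dvd (hdvd i 2) (Or.inl rfl),
             entry_dvd (hdvd i 3) (Or.inl rfl),
             entry_dvd (hdvd i 0) (Or.inl rfl),
             entry_dvd (hdvd i 1) (Or.inl rfl),
             entry_dvd (hdvd i 2) (Or.inl rfl),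
             entry_dvd (hdvd i 3) (Or.inl rfl)]

end Stmt8Aux

open Stmt8Aux in
theorem stmt_8 (n m : ℕ) (hn : 5 ≤ n) (hm : 5 ≤ m) (w : List Bool)
    (hwn : w.count true = n) (hwm : w.count false = m) :
    (T w).coeff 0 = 0 ∧ (T w).coeff 1 = 0 ∧ (T w).coeff 2 = 0 ∧ (T w).coeff 3 = 0 := by
  have hw : w ≠ [] := by
    rintro rfl
    simp at hwn
    omega
  obtain ⟨F, hF, hdvd⟩ := main w hw
  have h5 : ∀ k : ℕ, 5 ≤ k → capN k = ⟨5, by omega⟩ := by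
    intro k hk
    refine Fin.ext ?_
    simp only [capN]
    omega
  have h4 : (X : Polynomial ℝ) ^ 4 ∣ T w := by
    unfold T
    rw [hF, Matrix.trace_mul_comm (Ut * F) U, ← Matrix.mul_assoc, UUt]
    simp only [Matrix.trace, Matrix.diag_apply, Matrix.mul_apply]
    refine Finset.dvd_sum fun i _ => ?_
    refine Finset.dvd_sum fun j _ => ?_
    rcases finalFact i j with hz | h4'
    · rw [hz, zero_mul]
      exact dvd_zero _
    · have hd := hdvd j i
      have hcc : cc j i (w.count true) (w.count false) = 4 := by
        unfold cc
        rw [hwn, hwm, h5 n hn, h5 m hm, h4']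
      rw [hcc] at hd
      exact hd.trans (dvd_mul_left _ _)
  have hco := Polynomial.X_pow_dvd_iff.mp h4
  exact ⟨hco 0 (by norm_num), hco 1 (by norm_num), hco 2 (by norm_num),
    hco 3 (by norm_num)⟩
end

section
/- The polynomial ∑_{w ∈ 𝒲_{5,5}} T(w) ∈ ℝ[X] equals 2X⁴·(4881X⁶ + 5930X⁵ + 4875X⁴ + 3130X³ + 1675X² + 1422X + 5). Equivalently, p_{5,5}(A_x, B_x) = (x⁴/126)·(5 + 1422x + 1675x² + 3130x³ + 4875x⁴ + 5930x⁵ + 4881x⁶) for every real x. -/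
open Matrix Polynomial

set_option maxHeartbeats 4000000

/-- The (finite) set `𝒲_{n,m}` of words with exactly `n` letters `A` (`true`)
and `m` letters `B` (`false`). -/
def words (n m : ℕ) : Finset (List Bool) :=
  (List.replicate n true ++ List.replicate m false).permutations.toFinset

noncomputable def P (w : List Bool) : Matrix (Fin 3) (Fin 3) (Polynomial ℝ) :=
  (w.map fun b => if b = true then Apoly else Bpoly).prod

noncomputable def S (n m : ℕ) : Matrix (Fin 3) (Fin 3) (Polynomial ℝ) :=
  ∑ w ∈ words n m, P w

lemma P_cons (b : Bool) (t : List Bool) :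
    P (b :: t) = (if b = true then Apoly else Bpoly) * P t := by
  simp [P]

lemma mem_words {n m : ℕ} {w : List Bool} :
    w ∈ words n m ↔ w.count true = n ∧ w.count false = m := by
  unfold words
  rw [List.mem_toFinset, List.mem_permutations]
  constructor
  · intro h
    constructor
    · rw [h.count_eq]; simp [List.count_append, List.count_replicate]
    · rw [h.count_eq]; simp [List.count_append, List.count_replicate]
  · rintro ⟨h1, h2⟩
    rw [List.perm_iff_count]
    intro b
    cases b <;> simp [List.count_append, List.count_replicate, h1, h2]

lemma words_succ_succ (n m : ℕ) :
    words (n+1) (m+1) =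
      ((words n (m+1)).image (List.cons true)) ∪ ((words (n+1) m).image (List.cons false)) := by
  ext w
  simp only [Finset.mem_union, Finset.mem_image, mem_words]
  constructor
  · rintro ⟨h1, h2⟩
    match w with
    | [] => simp at h1
    | true :: t =>
      simp [List.count_cons] at h1 h2
      exact Or.inl ⟨t, ⟨by omega, by omega⟩, rfl⟩
    | false :: t =>
      simp [List.count_cons] at h1 h2
      exact Or.inr ⟨t, ⟨by omega, by omega⟩, rfl⟩
  · rintro (⟨t, ⟨h1, h2⟩, rfl⟩ | ⟨t, ⟨h1, h2⟩, rfl⟩) <;>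
      simp [List.count_cons, h1, h2]

lemma words_succ_zero (n : ℕ) :
    words (n+1) 0 = (words n 0).image (List.cons true) := by
  ext w
  simp only [Finset.mem_image, mem_words]
  constructor
  · rintro ⟨h1, h2⟩
    match w with
    | [] => simp at h1
    | true :: t =>
      simp [List.count_cons] at h1 h2
      exact ⟨t, ⟨by omega, by omega⟩, rfl⟩
    | false :: t =>
      simp [List.count_cons] at h2
  · rintro ⟨t, ⟨h1, h2⟩, rfl⟩
    simp [List.count_cons, h1, h2]

lemma words_zero_succ (m : ℕ) :
    words 0 (m+1) = (words 0 m).image (List.cons false) := by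
  ext w
  simp only [Finset.mem_image, mem_words]
  constructor
  · rintro ⟨h1, h2⟩
    match w with
    | [] => simp at h2
    | true :: t =>
      simp [List.count_cons] at h1
    | false :: t =>
      simp [List.count_cons] at h1 h2
      exact ⟨t, ⟨by omega, by omega⟩, rfl⟩
  · rintro ⟨t, ⟨h1, h2⟩, rfl⟩
    simp [List.count_cons, h1, h2]

lemma S_zero_zero : S 0 0 = 1 := by
  have h : words 0 0 = {([] : List Bool)} := by
    ext w
    simp only [mem_words, Finset.mem_singleton]
    constructor
    · rintro ⟨h1, h2⟩
      match w with
      | [] => rfl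
      | true :: t => simp [List.count_cons] at h1
      | false :: t => simp [List.count_cons] at h2
    · rintro rfl; simp
  simp [S, h, P]

lemma S_succ_zero (n : ℕ) : S (n+1) 0 = Apoly * S n 0 := by
  unfold S
  rw [words_succ_zero, Finset.sum_image (fun x _ y _ h => List.cons_injective h)]
  simp [P_cons, Finset.mul_sum]

lemma S_zero_succ (m : ℕ) : S 0 (m+1) = Bpoly * S 0 m := by
  unfold S
  rw [words_zero_succ, Finset.sum_image (fun x _ y _ h => List.cons_injective h)]
  simp [P_cons, Finset.mul_sum]

lemma S_succ_succ (n m : ℕ) :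
    S (n+1) (m+1) = Apoly * S n (m+1) + Bpoly * S (n+1) m := by
  unfold S
  rw [words_succ_succ, Finset.sum_union ?_,
    Finset.sum_image (fun x _ y _ h => List.cons_injective h),
    Finset.sum_image (fun x _ y _ h => List.cons_injective h)]
  · simp [P_cons, Finset.mul_sum]
  · rw [Finset.disjoint_left]
    rintro w hw hw'
    simp only [Finset.mem_image] at hw hw'
    obtain ⟨t, _, rfl⟩ := hw
    obtain ⟨t', _, h⟩ := hw'
    simp at h

noncomputable def M00 : Matrix (Fin 3) (Fin 3) (Polynomial ℝ) :=
  !![(1), 0, 0;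
    0, (1), 0;
    0, 0, (1)]

noncomputable def M01 : Matrix (Fin 3) (Fin 3) (Polynomial ℝ) :=
  !![(1) * X, (-1) * X, 0;
    (-1) * X, (1) * X, 0;
    0, 0, (1)]

noncomputable def M02 : Matrix (Fin 3) (Fin 3) (Polynomial ℝ) :=
  !![(2) * X ^ 2, (-2) * X ^ 2, 0;
    (-2) * X ^ 2, (2) * X ^ 2, 0;
    0, 0, (1)]

noncomputable def M03 : Matrix (Fin 3) (Fin 3) (Polynomial ℝ) :=
  !![(4) * X ^ 3, (-4) * X ^ 3, 0;
    (-4) * X ^ 3, (4) * X ^ 3, 0;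
    0, 0, (1)]

noncomputable def M04 : Matrix (Fin 3) (Fin 3) (Polynomial ℝ) :=
  !![(8) * X ^ 4, (-8) * X ^ 4, 0;
    (-8) * X ^ 4, (8) * X ^ 4, 0;
    0, 0, (1)]

noncomputable def M05 : Matrix (Fin 3) (Fin 3) (Polynomial ℝ) :=
  !![(16) * X ^ 5, (-16) * X ^ 5, 0;
    (-16) * X ^ 5, (16) * X ^ 5, 0;
    0, 0, (1)]

noncomputable def M10 : Matrix (Fin 3) (Fin 3) (Polynomial ℝ) :=
  !![(1), 0, 0;
    0, (1) * X, (-1) * X;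
    0, (-1) * X, (1) * X]

noncomputable def M11 : Matrix (Fin 3) (Fin 3) (Polynomial ℝ) :=
  !![(2) * X, (-1) * X ^ 2 + (-1) * X, (1) * X ^ 2;
    (-1) * X ^ 2 + (-1) * X, (2) * X ^ 2, (-1) * X ^ 2 + (-1) * X;
    (1) * X ^ 2, (-1) * X ^ 2 + (-1) * X, (2) * X]

noncomputable def M12 : Matrix (Fin 3) (Fin 3) (Polynomial ℝ) :=
  !![(1) * X ^ 3 + (5) * X ^ 2, (-3) * X ^ 3 + (-3) * X ^ 2, (2) * X ^ 3 + (1) * X ^ 2;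
    (-3) * X ^ 3 + (-3) * X ^ 2, (5) * X ^ 3 + (1) * X ^ 2, (-2) * X ^ 3 + (-1) * X ^ 2 + (-1) * X;
    (2) * X ^ 3 + (1) * X ^ 2, (-2) * X ^ 3 + (-1) * X ^ 2 + (-1) * X, (3) * X]

noncomputable def M13 : Matrix (Fin 3) (Fin 3) (Polynomial ℝ) :=
  !![(4) * X ^ 4 + (12) * X ^ 3, (-8) * X ^ 4 + (-8) * X ^ 3, (4) * X ^ 4 + (2) * X ^ 3 + (1) * X ^ 2;
    (-8) * X ^ 4 + (-8) * X ^ 3, (12) * X ^ 4 + (4) * X ^ 3, (-4) * X ^ 4 + (-2) * X ^ 3 + (-1) * X ^ 2 + (-1) * X;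
    (4) * X ^ 4 + (2) * X ^ 3 + (1) * X ^ 2, (-4) * X ^ 4 + (-2) * X ^ 3 + (-1) * X ^ 2 + (-1) * X, (4) * X]

noncomputable def M14 : Matrix (Fin 3) (Fin 3) (Polynomial ℝ) :=
  !![(12) * X ^ 5 + (28) * X ^ 4, (-20) * X ^ 5 + (-20) * X ^ 4, (8) * X ^ 5 + (4) * X ^ 4 + (2) * X ^ 3 + (1) * X ^ 2;
    (-20) * X ^ 5 + (-20) * X ^ 4, (28) * X ^ 5 + (12) * X ^ 4, (-8) * X ^ 5 + (-4) * X ^ 4 + (-2) * X ^ 3 + (-1) * X ^ 2 + (-1) * X;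
    (8) * X ^ 5 + (4) * X ^ 4 + (2) * X ^ 3 + (1) * X ^ 2, (-8) * X ^ 5 + (-4) * X ^ 4 + (-2) * X ^ 3 + (-1) * X ^ 2 + (-1) * X, (5) * X]

noncomputable def M15 : Matrix (Fin 3) (Fin 3) (Polynomial ℝ) :=
  !![(32) * X ^ 6 + (64) * X ^ 5, (-48) * X ^ 6 + (-48) * X ^ 5, (16) * X ^ 6 + (8) * X ^ 5 + (4) * X ^ 4 + (2) * X ^ 3 + (1) * X ^ 2;
    (-48) * X ^ 6 + (-48) * X ^ 5, (64) * X ^ 6 + (32) * X ^ 5, (-16) * X ^ 6 + (-8) * X ^ 5 + (-4) * X ^ 4 + (-2) * X ^ 3 + (-1) * X ^ 2 + (-1) * X;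
    (16) * X ^ 6 + (8) * X ^ 5 + (4) * X ^ 4 + (2) * X ^ 3 + (1) * X ^ 2, (-16) * X ^ 6 + (-8) * X ^ 5 + (-4) * X ^ 4 + (-2) * X ^ 3 + (-1) * X ^ 2 + (-1) * X, (6) * X]

noncomputable def M20 : Matrix (Fin 3) (Fin 3) (Polynomial ℝ) :=
  !![(1), 0, 0;
    0, (2) * X ^ 2, (-2) * X ^ 2;
    0, (-2) * X ^ 2, (2) * X ^ 2]

noncomputable def M21 : Matrix (Fin 3) (Fin 3) (Polynomial ℝ) :=
  !![(3) * X, (-2) * X ^ 3 + (-1) * X ^ 2 + (-1) * X, (2) * X ^ 3 + (1) * X ^ 2;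
    (-2) * X ^ 3 + (-1) * X ^ 2 + (-1) * X, (5) * X ^ 3 + (1) * X ^ 2, (-3) * X ^ 3 + (-3) * X ^ 2;
    (2) * X ^ 3 + (1) * X ^ 2, (-3) * X ^ 3 + (-3) * X ^ 2, (1) * X ^ 3 + (5) * X ^ 2]

noncomputable def M22 : Matrix (Fin 3) (Fin 3) (Polynomial ℝ) :=
  !![(2) * X ^ 4 + (2) * X ^ 3 + (9) * X ^ 2, (-7) * X ^ 4 + (-5) * X ^ 3 + (-4) * X ^ 2, (5) * X ^ 4 + (6) * X ^ 3 + (1) * X ^ 2;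
    (-7) * X ^ 4 + (-5) * X ^ 3 + (-4) * X ^ 2, (14) * X ^ 4 + (4) * X ^ 3 + (2) * X ^ 2, (-7) * X ^ 4 + (-5) * X ^ 3 + (-4) * X ^ 2;
    (5) * X ^ 4 + (6) * X ^ 3 + (1) * X ^ 2, (-7) * X ^ 4 + (-5) * X ^ 3 + (-4) * X ^ 2, (2) * X ^ 4 + (2) * X ^ 3 + (9) * X ^ 2]

noncomputable def M23 : Matrix (Fin 3) (Fin 3) (Polynomial ℝ) :=
  !![(9) * X ^ 5 + (11) * X ^ 4 + (25) * X ^ 3, (-21) * X ^ 5 + (-17) * X ^ 4 + (-14) * X ^ 3, (12) * X ^ 5 + (15) * X ^ 4 + (7) * X ^ 3 + (1) * X ^ 2;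
    (-21) * X ^ 5 + (-17) * X ^ 4 + (-14) * X ^ 3, (37) * X ^ 5 + (15) * X ^ 4 + (7) * X ^ 3 + (1) * X ^ 2, (-16) * X ^ 5 + (-13) * X ^ 4 + (-6) * X ^ 3 + (-5) * X ^ 2;
    (12) * X ^ 5 + (15) * X ^ 4 + (7) * X ^ 3 + (1) * X ^ 2, (-16) * X ^ 5 + (-13) * X ^ 4 + (-6) * X ^ 3 + (-5) * X ^ 2, (4) * X ^ 5 + (4) * X ^ 4 + (3) * X ^ 3 + (14) * X ^ 2]

noncomputable def M24 : Matrix (Fin 3) (Fin 3) (Polynomial ℝ) :=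
  !![(30) * X ^ 6 + (40) * X ^ 5 + (67) * X ^ 4, (-58) * X ^ 6 + (-52) * X ^ 5 + (-41) * X ^ 4 + (-1) * X ^ 3, (28) * X ^ 6 + (36) * X ^ 5 + (17) * X ^ 4 + (8) * X ^ 3 + (1) * X ^ 2;
    (-58) * X ^ 6 + (-52) * X ^ 5 + (-41) * X ^ 4 + (-1) * X ^ 3, (94) * X ^ 6 + (48) * X ^ 5 + (23) * X ^ 4 + (2) * X ^ 3 + (1) * X ^ 2, (-36) * X ^ 6 + (-32) * X ^ 5 + (-15) * X ^ 4 + (-7) * X ^ 3 + (-6) * X ^ 2;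
    (28) * X ^ 6 + (36) * X ^ 5 + (17) * X ^ 4 + (8) * X ^ 3 + (1) * X ^ 2, (-36) * X ^ 6 + (-32) * X ^ 5 + (-15) * X ^ 4 + (-7) * X ^ 3 + (-6) * X ^ 2, (8) * X ^ 6 + (8) * X ^ 5 + (6) * X ^ 4 + (4) * X ^ 3 + (20) * X ^ 2]

noncomputable def M25 : Matrix (Fin 3) (Fin 3) (Polynomial ℝ) :=
  !![(88) * X ^ 7 + (124) * X ^ 6 + (172) * X ^ 5 + (1) * X ^ 4, (-152) * X ^ 7 + (-148) * X ^ 6 + (-112) * X ^ 5 + (-3) * X ^ 4 + (-1) * X ^ 3, (64) * X ^ 7 + (84) * X ^ 6 + (40) * X ^ 5 + (19) * X ^ 4 + (9) * X ^ 3 + (1) * X ^ 2;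
    (-152) * X ^ 7 + (-148) * X ^ 6 + (-112) * X ^ 5 + (-3) * X ^ 4 + (-1) * X ^ 3, (232) * X ^ 7 + (140) * X ^ 6 + (68) * X ^ 5 + (5) * X ^ 4 + (2) * X ^ 3 + (1) * X ^ 2, (-80) * X ^ 7 + (-76) * X ^ 6 + (-36) * X ^ 5 + (-17) * X ^ 4 + (-8) * X ^ 3 + (-7) * X ^ 2;
    (64) * X ^ 7 + (84) * X ^ 6 + (40) * X ^ 5 + (19) * X ^ 4 + (9) * X ^ 3 + (1) * X ^ 2, (-80) * X ^ 7 + (-76) * X ^ 6 + (-36) * X ^ 5 + (-17) * X ^ 4 + (-8) * X ^ 3 + (-7) * X ^ 2, (16) * X ^ 7 + (16) * X ^ 6 + (12) * X ^ 5 + (8) * X ^ 4 + (5) * X ^ 3 + (27) * X ^ 2]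

noncomputable def M30 : Matrix (Fin 3) (Fin 3) (Polynomial ℝ) :=
  !![(1), 0, 0;
    0, (4) * X ^ 3, (-4) * X ^ 3;
    0, (-4) * X ^ 3, (4) * X ^ 3]

noncomputable def M31 : Matrix (Fin 3) (Fin 3) (Polynomial ℝ) :=
  !![(4) * X, (-4) * X ^ 4 + (-2) * X ^ 3 + (-1) * X ^ 2 + (-1) * X, (4) * X ^ 4 + (2) * X ^ 3 + (1) * X ^ 2;
    (-4) * X ^ 4 + (-2) * X ^ 3 + (-1) * X ^ 2 + (-1) * X, (12) * X ^ 4 + (4) * X ^ 3, (-8) * X ^ 4 + (-8) * X ^ 3;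
    (4) * X ^ 4 + (2) * X ^ 3 + (1) * X ^ 2, (-8) * X ^ 4 + (-8) * X ^ 3, (4) * X ^ 4 + (12) * X ^ 3]

noncomputable def M32 : Matrix (Fin 3) (Fin 3) (Polynomial ℝ) :=
  !![(4) * X ^ 5 + (4) * X ^ 4 + (3) * X ^ 3 + (14) * X ^ 2, (-16) * X ^ 5 + (-13) * X ^ 4 + (-6) * X ^ 3 + (-5) * X ^ 2, (12) * X ^ 5 + (15) * X ^ 4 + (7) * X ^ 3 + (1) * X ^ 2;
    (-16) * X ^ 5 + (-13) * X ^ 4 + (-6) * X ^ 3 + (-5) * X ^ 2, (37) * X ^ 5 + (15) * X ^ 4 + (7) * X ^ 3 + (1) * X ^ 2, (-21) * X ^ 5 + (-17) * X ^ 4 + (-14) * X ^ 3;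
    (12) * X ^ 5 + (15) * X ^ 4 + (7) * X ^ 3 + (1) * X ^ 2, (-21) * X ^ 5 + (-17) * X ^ 4 + (-14) * X ^ 3, (9) * X ^ 5 + (11) * X ^ 4 + (25) * X ^ 3]

noncomputable def M33 : Matrix (Fin 3) (Fin 3) (Polynomial ℝ) :=
  !![(20) * X ^ 6 + (26) * X ^ 5 + (20) * X ^ 4 + (44) * X ^ 3, (-53) * X ^ 6 + (-49) * X ^ 5 + (-30) * X ^ 4 + (-20) * X ^ 3, (33) * X ^ 6 + (44) * X ^ 5 + (36) * X ^ 4 + (8) * X ^ 3 + (1) * X ^ 2;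
    (-53) * X ^ 6 + (-49) * X ^ 5 + (-30) * X ^ 4 + (-20) * X ^ 3, (106) * X ^ 6 + (56) * X ^ 5 + (26) * X ^ 4 + (12) * X ^ 3, (-53) * X ^ 6 + (-49) * X ^ 5 + (-30) * X ^ 4 + (-20) * X ^ 3;
    (33) * X ^ 6 + (44) * X ^ 5 + (36) * X ^ 4 + (8) * X ^ 3 + (1) * X ^ 2, (-53) * X ^ 6 + (-49) * X ^ 5 + (-30) * X ^ 4 + (-20) * X ^ 3, (20) * X ^ 6 + (26) * X ^ 5 + (20) * X ^ 4 + (44) * X ^ 3]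

noncomputable def M34 : Matrix (Fin 3) (Fin 3) (Polynomial ℝ) :=
  !![(73) * X ^ 7 + (105) * X ^ 6 + (90) * X ^ 5 + (131) * X ^ 4, (-159) * X ^ 7 + (-163) * X ^ 6 + (-108) * X ^ 5 + (-73) * X ^ 4 + (-1) * X ^ 3, (86) * X ^ 7 + (121) * X ^ 6 + (102) * X ^ 5 + (45) * X ^ 4 + (9) * X ^ 3 + (1) * X ^ 2;
    (-159) * X ^ 7 + (-163) * X ^ 6 + (-108) * X ^ 5 + (-73) * X ^ 4 + (-1) * X ^ 3, (289) * X ^ 7 + (185) * X ^ 6 + (94) * X ^ 5 + (41) * X ^ 4 + (7) * X ^ 3, (-130) * X ^ 7 + (-133) * X ^ 6 + (-87) * X ^ 5 + (-39) * X ^ 4 + (-27) * X ^ 3;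
    (86) * X ^ 7 + (121) * X ^ 6 + (102) * X ^ 5 + (45) * X ^ 4 + (9) * X ^ 3 + (1) * X ^ 2, (-130) * X ^ 7 + (-133) * X ^ 6 + (-87) * X ^ 5 + (-39) * X ^ 4 + (-27) * X ^ 3, (44) * X ^ 7 + (60) * X ^ 6 + (47) * X ^ 5 + (31) * X ^ 4 + (70) * X ^ 3]

noncomputable def M35 : Matrix (Fin 3) (Fin 3) (Polynomial ℝ) :=
  !![(232) * X ^ 8 + (356) * X ^ 7 + (322) * X ^ 6 + (376) * X ^ 5 + (2) * X ^ 4, (-448) * X ^ 8 + (-500) * X ^ 7 + (-350) * X ^ 6 + (-226) * X ^ 5 + (-11) * X ^ 4 + (-1) * X ^ 3, (216) * X ^ 8 + (318) * X ^ 7 + (273) * X ^ 6 + (124) * X ^ 5 + (55) * X ^ 4 + (10) * X ^ 3 + (1) * X ^ 2;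
    (-448) * X ^ 8 + (-500) * X ^ 7 + (-350) * X ^ 6 + (-226) * X ^ 5 + (-11) * X ^ 4 + (-1) * X ^ 3, (760) * X ^ 8 + (564) * X ^ 7 + (306) * X ^ 6 + (136) * X ^ 5 + (18) * X ^ 4 + (8) * X ^ 3, (-312) * X ^ 8 + (-346) * X ^ 7 + (-237) * X ^ 6 + (-109) * X ^ 5 + (-49) * X ^ 4 + (-35) * X ^ 3;
    (216) * X ^ 8 + (318) * X ^ 7 + (273) * X ^ 6 + (124) * X ^ 5 + (55) * X ^ 4 + (10) * X ^ 3 + (1) * X ^ 2, (-312) * X ^ 8 + (-346) * X ^ 7 + (-237) * X ^ 6 + (-109) * X ^ 5 + (-49) * X ^ 4 + (-35) * X ^ 3, (96) * X ^ 8 + (136) * X ^ 7 + (108) * X ^ 6 + (72) * X ^ 5 + (44) * X ^ 4 + (104) * X ^ 3]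

noncomputable def M40 : Matrix (Fin 3) (Fin 3) (Polynomial ℝ) :=
  !![(1), 0, 0;
    0, (8) * X ^ 4, (-8) * X ^ 4;
    0, (-8) * X ^ 4, (8) * X ^ 4]

noncomputable def M41 : Matrix (Fin 3) (Fin 3) (Polynomial ℝ) :=
  !![(5) * X, (-8) * X ^ 5 + (-4) * X ^ 4 + (-2) * X ^ 3 + (-1) * X ^ 2 + (-1) * X, (8) * X ^ 5 + (4) * X ^ 4 + (2) * X ^ 3 + (1) * X ^ 2;
    (-8) * X ^ 5 + (-4) * X ^ 4 + (-2) * X ^ 3 + (-1) * X ^ 2 + (-1) * X, (28) * X ^ 5 + (12) * X ^ 4, (-20) * X ^ 5 + (-20) * X ^ 4;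
    (8) * X ^ 5 + (4) * X ^ 4 + (2) * X ^ 3 + (1) * X ^ 2, (-20) * X ^ 5 + (-20) * X ^ 4, (12) * X ^ 5 + (28) * X ^ 4]

noncomputable def M42 : Matrix (Fin 3) (Fin 3) (Polynomial ℝ) :=
  !![(8) * X ^ 6 + (8) * X ^ 5 + (6) * X ^ 4 + (4) * X ^ 3 + (20) * X ^ 2, (-36) * X ^ 6 + (-32) * X ^ 5 + (-15) * X ^ 4 + (-7) * X ^ 3 + (-6) * X ^ 2, (28) * X ^ 6 + (36) * X ^ 5 + (17) * X ^ 4 + (8) * X ^ 3 + (1) * X ^ 2;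
    (-36) * X ^ 6 + (-32) * X ^ 5 + (-15) * X ^ 4 + (-7) * X ^ 3 + (-6) * X ^ 2, (94) * X ^ 6 + (48) * X ^ 5 + (23) * X ^ 4 + (2) * X ^ 3 + (1) * X ^ 2, (-58) * X ^ 6 + (-52) * X ^ 5 + (-41) * X ^ 4 + (-1) * X ^ 3;
    (28) * X ^ 6 + (36) * X ^ 5 + (17) * X ^ 4 + (8) * X ^ 3 + (1) * X ^ 2, (-58) * X ^ 6 + (-52) * X ^ 5 + (-41) * X ^ 4 + (-1) * X ^ 3, (30) * X ^ 6 + (40) * X ^ 5 + (67) * X ^ 4]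

noncomputable def M43 : Matrix (Fin 3) (Fin 3) (Polynomial ℝ) :=
  !![(44) * X ^ 7 + (60) * X ^ 6 + (47) * X ^ 5 + (31) * X ^ 4 + (70) * X ^ 3, (-130) * X ^ 7 + (-133) * X ^ 6 + (-87) * X ^ 5 + (-39) * X ^ 4 + (-27) * X ^ 3, (86) * X ^ 7 + (121) * X ^ 6 + (102) * X ^ 5 + (45) * X ^ 4 + (9) * X ^ 3 + (1) * X ^ 2;
    (-130) * X ^ 7 + (-133) * X ^ 6 + (-87) * X ^ 5 + (-39) * X ^ 4 + (-27) * X ^ 3, (289) * X ^ 7 + (185) * X ^ 6 + (94) * X ^ 5 + (41) * X ^ 4 + (7) * X ^ 3, (-159) * X ^ 7 + (-163) * X ^ 6 + (-108) * X ^ 5 + (-73) * X ^ 4 + (-1) * X ^ 3;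
    (86) * X ^ 7 + (121) * X ^ 6 + (102) * X ^ 5 + (45) * X ^ 4 + (9) * X ^ 3 + (1) * X ^ 2, (-159) * X ^ 7 + (-163) * X ^ 6 + (-108) * X ^ 5 + (-73) * X ^ 4 + (-1) * X ^ 3, (73) * X ^ 7 + (105) * X ^ 6 + (90) * X ^ 5 + (131) * X ^ 4]

noncomputable def M44 : Matrix (Fin 3) (Fin 3) (Polynomial ℝ) :=
  !![(174) * X ^ 8 + (266) * X ^ 7 + (239) * X ^ 6 + (160) * X ^ 5 + (228) * X ^ 4, (-419) * X ^ 8 + (-477) * X ^ 7 + (-344) * X ^ 6 + (-188) * X ^ 5 + (-107) * X ^ 4 + (-1) * X ^ 3, (245) * X ^ 8 + (370) * X ^ 7 + (331) * X ^ 6 + (220) * X ^ 5 + (55) * X ^ 4 + (10) * X ^ 3 + (1) * X ^ 2;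
    (-419) * X ^ 8 + (-477) * X ^ 7 + (-344) * X ^ 6 + (-188) * X ^ 5 + (-107) * X ^ 4 + (-1) * X ^ 3, (838) * X ^ 8 + (636) * X ^ 7 + (362) * X ^ 6 + (160) * X ^ 5 + (68) * X ^ 4, (-419) * X ^ 8 + (-477) * X ^ 7 + (-344) * X ^ 6 + (-188) * X ^ 5 + (-107) * X ^ 4 + (-1) * X ^ 3;
    (245) * X ^ 8 + (370) * X ^ 7 + (331) * X ^ 6 + (220) * X ^ 5 + (55) * X ^ 4 + (10) * X ^ 3 + (1) * X ^ 2, (-419) * X ^ 8 + (-477) * X ^ 7 + (-344) * X ^ 6 + (-188) * X ^ 5 + (-107) * X ^ 4 + (-1) * X ^ 3, (174) * X ^ 8 + (266) * X ^ 7 + (239) * X ^ 6 + (160) * X ^ 5 + (228) * X ^ 4]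

noncomputable def M45 : Matrix (Fin 3) (Fin 3) (Polynomial ℝ) :=
  !![(593) * X ^ 9 + (975) * X ^ 8 + (939) * X ^ 7 + (670) * X ^ 6 + (711) * X ^ 5 + (3) * X ^ 4, (-1257) * X ^ 9 + (-1561) * X ^ 8 + (-1206) * X ^ 7 + (-698) * X ^ 6 + (-401) * X ^ 5 + (-12) * X ^ 4 + (-1) * X ^ 3, (664) * X ^ 9 + (1063) * X ^ 8 + (993) * X ^ 7 + (681) * X ^ 6 + (286) * X ^ 5 + (66) * X ^ 4 + (11) * X ^ 3 + (1) * X ^ 2;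
    (-1257) * X ^ 9 + (-1561) * X ^ 8 + (-1206) * X ^ 7 + (-698) * X ^ 6 + (-401) * X ^ 5 + (-12) * X ^ 4 + (-1) * X ^ 3, (2329) * X ^ 9 + (2023) * X ^ 8 + (1249) * X ^ 7 + (593) * X ^ 6 + (242) * X ^ 5 + (44) * X ^ 4, (-1072) * X ^ 9 + (-1329) * X ^ 8 + (-1020) * X ^ 7 + (-589) * X ^ 6 + (-255) * X ^ 5 + (-150) * X ^ 4 + (-1) * X ^ 3;
    (664) * X ^ 9 + (1063) * X ^ 8 + (993) * X ^ 7 + (681) * X ^ 6 + (286) * X ^ 5 + (66) * X ^ 4 + (11) * X ^ 3 + (1) * X ^ 2, (-1072) * X ^ 9 + (-1329) * X ^ 8 + (-1020) * X ^ 7 + (-589) * X ^ 6 + (-255) * X ^ 5 + (-150) * X ^ 4 + (-1) * X ^ 3, (408) * X ^ 9 + (656) * X ^ 8 + (611) * X ^ 7 + (420) * X ^ 6 + (253) * X ^ 5 + (367) * X ^ 4]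

noncomputable def M50 : Matrix (Fin 3) (Fin 3) (Polynomial ℝ) :=
  !![(1), 0, 0;
    0, (16) * X ^ 5, (-16) * X ^ 5;
    0, (-16) * X ^ 5, (16) * X ^ 5]

noncomputable def M51 : Matrix (Fin 3) (Fin 3) (Polynomial ℝ) :=
  !![(6) * X, (-16) * X ^ 6 + (-8) * X ^ 5 + (-4) * X ^ 4 + (-2) * X ^ 3 + (-1) * X ^ 2 + (-1) * X, (16) * X ^ 6 + (8) * X ^ 5 + (4) * X ^ 4 + (2) * X ^ 3 + (1) * X ^ 2;
    (-16) * X ^ 6 + (-8) * X ^ 5 + (-4) * X ^ 4 + (-2) * X ^ 3 + (-1) * X ^ 2 + (-1) * X, (64) * X ^ 6 + (32) * X ^ 5, (-48) * X ^ 6 + (-48) * X ^ 5;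
    (16) * X ^ 6 + (8) * X ^ 5 + (4) * X ^ 4 + (2) * X ^ 3 + (1) * X ^ 2, (-48) * X ^ 6 + (-48) * X ^ 5, (32) * X ^ 6 + (64) * X ^ 5]

noncomputable def M52 : Matrix (Fin 3) (Fin 3) (Polynomial ℝ) :=
  !![(16) * X ^ 7 + (16) * X ^ 6 + (12) * X ^ 5 + (8) * X ^ 4 + (5) * X ^ 3 + (27) * X ^ 2, (-80) * X ^ 7 + (-76) * X ^ 6 + (-36) * X ^ 5 + (-17) * X ^ 4 + (-8) * X ^ 3 + (-7) * X ^ 2, (64) * X ^ 7 + (84) * X ^ 6 + (40) * X ^ 5 + (19) * X ^ 4 + (9) * X ^ 3 + (1) * X ^ 2;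
    (-80) * X ^ 7 + (-76) * X ^ 6 + (-36) * X ^ 5 + (-17) * X ^ 4 + (-8) * X ^ 3 + (-7) * X ^ 2, (232) * X ^ 7 + (140) * X ^ 6 + (68) * X ^ 5 + (5) * X ^ 4 + (2) * X ^ 3 + (1) * X ^ 2, (-152) * X ^ 7 + (-148) * X ^ 6 + (-112) * X ^ 5 + (-3) * X ^ 4 + (-1) * X ^ 3;
    (64) * X ^ 7 + (84) * X ^ 6 + (40) * X ^ 5 + (19) * X ^ 4 + (9) * X ^ 3 + (1) * X ^ 2, (-152) * X ^ 7 + (-148) * X ^ 6 + (-112) * X ^ 5 + (-3) * X ^ 4 + (-1) * X ^ 3, (88) * X ^ 7 + (124) * X ^ 6 + (172) * X ^ 5 + (1) * X ^ 4]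

noncomputable def M53 : Matrix (Fin 3) (Fin 3) (Polynomial ℝ) :=
  !![(96) * X ^ 8 + (136) * X ^ 7 + (108) * X ^ 6 + (72) * X ^ 5 + (44) * X ^ 4 + (104) * X ^ 3, (-312) * X ^ 8 + (-346) * X ^ 7 + (-237) * X ^ 6 + (-109) * X ^ 5 + (-49) * X ^ 4 + (-35) * X ^ 3, (216) * X ^ 8 + (318) * X ^ 7 + (273) * X ^ 6 + (124) * X ^ 5 + (55) * X ^ 4 + (10) * X ^ 3 + (1) * X ^ 2;
    (-312) * X ^ 8 + (-346) * X ^ 7 + (-237) * X ^ 6 + (-109) * X ^ 5 + (-49) * X ^ 4 + (-35) * X ^ 3, (760) * X ^ 8 + (564) * X ^ 7 + (306) * X ^ 6 + (136) * X ^ 5 + (18) * X ^ 4 + (8) * X ^ 3, (-448) * X ^ 8 + (-500) * X ^ 7 + (-350) * X ^ 6 + (-226) * X ^ 5 + (-11) * X ^ 4 + (-1) * X ^ 3;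
    (216) * X ^ 8 + (318) * X ^ 7 + (273) * X ^ 6 + (124) * X ^ 5 + (55) * X ^ 4 + (10) * X ^ 3 + (1) * X ^ 2, (-448) * X ^ 8 + (-500) * X ^ 7 + (-350) * X ^ 6 + (-226) * X ^ 5 + (-11) * X ^ 4 + (-1) * X ^ 3, (232) * X ^ 8 + (356) * X ^ 7 + (322) * X ^ 6 + (376) * X ^ 5 + (2) * X ^ 4]

noncomputable def M54 : Matrix (Fin 3) (Fin 3) (Polynomial ℝ) :=
  !![(408) * X ^ 9 + (656) * X ^ 8 + (611) * X ^ 7 + (420) * X ^ 6 + (253) * X ^ 5 + (367) * X ^ 4, (-1072) * X ^ 9 + (-1329) * X ^ 8 + (-1020) * X ^ 7 + (-589) * X ^ 6 + (-255) * X ^ 5 + (-150) * X ^ 4 + (-1) * X ^ 3, (664) * X ^ 9 + (1063) * X ^ 8 + (993) * X ^ 7 + (681) * X ^ 6 + (286) * X ^ 5 + (66) * X ^ 4 + (11) * X ^ 3 + (1) * X ^ 2;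
    (-1072) * X ^ 9 + (-1329) * X ^ 8 + (-1020) * X ^ 7 + (-589) * X ^ 6 + (-255) * X ^ 5 + (-150) * X ^ 4 + (-1) * X ^ 3, (2329) * X ^ 9 + (2023) * X ^ 8 + (1249) * X ^ 7 + (593) * X ^ 6 + (242) * X ^ 5 + (44) * X ^ 4, (-1257) * X ^ 9 + (-1561) * X ^ 8 + (-1206) * X ^ 7 + (-698) * X ^ 6 + (-401) * X ^ 5 + (-12) * X ^ 4 + (-1) * X ^ 3;
    (664) * X ^ 9 + (1063) * X ^ 8 + (993) * X ^ 7 + (681) * X ^ 6 + (286) * X ^ 5 + (66) * X ^ 4 + (11) * X ^ 3 + (1) * X ^ 2, (-1257) * X ^ 9 + (-1561) * X ^ 8 + (-1206) * X ^ 7 + (-698) * X ^ 6 + (-401) * X ^ 5 + (-12) * X ^ 4 + (-1) * X ^ 3, (593) * X ^ 9 + (975) * X ^ 8 + (939) * X ^ 7 + (670) * X ^ 6 + (711) * X ^ 5 + (3) * X ^ 4]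

noncomputable def M55 : Matrix (Fin 3) (Fin 3) (Polynomial ℝ) :=
  !![(1480) * X ^ 10 + (2578) * X ^ 9 + (2606) * X ^ 8 + (1948) * X ^ 7 + (1178) * X ^ 6 + (1228) * X ^ 5 + (4) * X ^ 4, (-3401) * X ^ 10 + (-4609) * X ^ 9 + (-3830) * X ^ 8 + (-2388) * X ^ 7 + (-1195) * X ^ 6 + (-595) * X ^ 5 + (-13) * X ^ 4 + (-1) * X ^ 3, (1921) * X ^ 10 + (3288) * X ^ 9 + (3262) * X ^ 8 + (2372) * X ^ 7 + (1368) * X ^ 6 + (364) * X ^ 5 + (78) * X ^ 4 + (12) * X ^ 3 + (1) * X ^ 2;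
    (-3401) * X ^ 10 + (-4609) * X ^ 9 + (-3830) * X ^ 8 + (-2388) * X ^ 7 + (-1195) * X ^ 6 + (-595) * X ^ 5 + (-13) * X ^ 4 + (-1) * X ^ 3, (6802) * X ^ 10 + (6704) * X ^ 9 + (4538) * X ^ 8 + (2364) * X ^ 7 + (994) * X ^ 6 + (388) * X ^ 5 + (2) * X ^ 4, (-3401) * X ^ 10 + (-4609) * X ^ 9 + (-3830) * X ^ 8 + (-2388) * X ^ 7 + (-1195) * X ^ 6 + (-595) * X ^ 5 + (-13) * X ^ 4 + (-1) * X ^ 3;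
    (1921) * X ^ 10 + (3288) * X ^ 9 + (3262) * X ^ 8 + (2372) * X ^ 7 + (1368) * X ^ 6 + (364) * X ^ 5 + (78) * X ^ 4 + (12) * X ^ 3 + (1) * X ^ 2, (-3401) * X ^ 10 + (-4609) * X ^ 9 + (-3830) * X ^ 8 + (-2388) * X ^ 7 + (-1195) * X ^ 6 + (-595) * X ^ 5 + (-13) * X ^ 4 + (-1) * X ^ 3, (1480) * X ^ 10 + (2578) * X ^ 9 + (2606) * X ^ 8 + (1948) * X ^ 7 + (1178) * X ^ 6 + (1228) * X ^ 5 + (4) * X ^ 4]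


lemma fin3_eq {R : Type*} {a11 a12 a13 a21 a22 a23 a31 a32 a33 b11 b12 b13 b21 b22 b23 b31 b32 b33 : R}
    (h11 : a11 = b11) (h12 : a12 = b12) (h13 : a13 = b13)
    (h21 : a21 = b21) (h22 : a22 = b22) (h23 : a23 = b23)
    (h31 : a31 = b31) (h32 : a32 = b32) (h33 : a33 = b33) :
    !![a11, a12, a13; a21, a22, a23; a31, a32, a33] =
      !![b11, b12, b13; b21, b22, b23; b31, b32, b33] := by
  subst_vars; rfl

lemma add_fin3 {R : Type*} [AddCommMonoid R]
    (a11 a12 a13 a21 a22 a23 a31 a32 a33 b11 b12 b13 b21 b22 b23 b31 b32 b33 : R) :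
    !![a11, a12, a13; a21, a22, a23; a31, a32, a33] +
      !![b11, b12, b13; b21, b22, b23; b31, b32, b33] =
    !![a11 + b11, a12 + b12, a13 + b13; a21 + b21, a22 + b22, a23 + b23;
       a31 + b31, a32 + b32, a33 + b33] := by
  ext i j : 2
  fin_cases i <;> fin_cases j <;> rfl

lemma hS00 : S 0 0 = M00 := by
  rw [S_zero_zero, Matrix.one_fin_three]
  rfl

lemma hS10 : S 1 0 = M10 := by
  rw [S_succ_zero, hS00]
  simp only [Apoly, Bpoly, M00, M10, Matrix.mul_fin_three, add_fin3]
  apply fin3_eq <;> ring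

lemma hS20 : S 2 0 = M20 := by
  rw [S_succ_zero, hS10]
  simp only [Apoly, Bpoly, M10, M20, Matrix.mul_fin_three, add_fin3]
  apply fin3_eq <;> ring

lemma hS30 : S 3 0 = M30 := by
  rw [S_succ_zero, hS20]
  simp only [Apoly, Bpoly, M20, M30, Matrix.mul_fin_three, add_fin3]
  apply fin3_eq <;> ring

lemma hS40 : S 4 0 = M40 := by
  rw [S_succ_zero, hS30]
  simp only [Apoly, Bpoly, M30, M40, Matrix.mul_fin_three, add_fin3]
  apply fin3_eq <;> ring

lemma hS50 : S 5 0 = M50 := by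
  rw [S_succ_zero, hS40]
  simp only [Apoly, Bpoly, M40, M50, Matrix.mul_fin_three, add_fin3]
  apply fin3_eq <;> ring

lemma hS01 : S 0 1 = M01 := by
  rw [S_zero_succ, hS00]
  simp only [Apoly, Bpoly, M00, M01, Matrix.mul_fin_three, add_fin3]
  apply fin3_eq <;> ring

lemma hS02 : S 0 2 = M02 := by
  rw [S_zero_succ, hS01]
  simp only [Apoly, Bpoly, M01, M02, Matrix.mul_fin_three, add_fin3]
  apply fin3_eq <;> ring

lemma hS03 : S 0 3 = M03 := by
  rw [S_zero_succ, hS02]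
  simp only [Apoly, Bpoly, M02, M03, Matrix.mul_fin_three, add_fin3]
  apply fin3_eq <;> ring

lemma hS04 : S 0 4 = M04 := by
  rw [S_zero_succ, hS03]
  simp only [Apoly, Bpoly, M03, M04, Matrix.mul_fin_three, add_fin3]
  apply fin3_eq <;> ring

lemma hS05 : S 0 5 = M05 := by
  rw [S_zero_succ, hS04]
  simp only [Apoly, Bpoly, M04, M05, Matrix.mul_fin_three, add_fin3]
  apply fin3_eq <;> ring

lemma hS11 : S 1 1 = M11 := by
  rw [S_succ_succ, hS01, hS10]
  simp only [Apoly, Bpoly, M01, M10, M11, Matrix.mul_fin_three, add_fin3]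
  apply fin3_eq <;> ring

lemma hS12 : S 1 2 = M12 := by
  rw [S_succ_succ, hS02, hS11]
  simp only [Apoly, Bpoly, M02, M11, M12, Matrix.mul_fin_three, add_fin3]
  apply fin3_eq <;> ring

lemma hS13 : S 1 3 = M13 := by
  rw [S_succ_succ, hS03, hS12]
  simp only [Apoly, Bpoly, M03, M12, M13, Matrix.mul_fin_three, add_fin3]
  apply fin3_eq <;> ring

lemma hS14 : S 1 4 = M14 := by
  rw [S_succ_succ, hS04, hS13]
  simp only [Apoly, Bpoly, M04, M13, M14, Matrix.mul_fin_three, add_fin3]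
  apply fin3_eq <;> ring

lemma hS15 : S 1 5 = M15 := by
  rw [S_succ_succ, hS05, hS14]
  simp only [Apoly, Bpoly, M05, M14, M15, Matrix.mul_fin_three, add_fin3]
  apply fin3_eq <;> ring

lemma hS21 : S 2 1 = M21 := by
  rw [S_succ_succ, hS11, hS20]
  simp only [Apoly, Bpoly, M11, M20, M21, Matrix.mul_fin_three, add_fin3]
  apply fin3_eq <;> ring

lemma hS22 : S 2 2 = M22 := by
  rw [S_succ_succ, hS12, hS21]
  simp only [Apoly, Bpoly, M12, M21, M22, Matrix.mul_fin_three, add_fin3]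
  apply fin3_eq <;> ring

lemma hS23 : S 2 3 = M23 := by
  rw [S_succ_succ, hS13, hS22]
  simp only [Apoly, Bpoly, M13, M22, M23, Matrix.mul_fin_three, add_fin3]
  apply fin3_eq <;> ring

lemma hS24 : S 2 4 = M24 := by
  rw [S_succ_succ, hS14, hS23]
  simp only [Apoly, Bpoly, M14, M23, M24, Matrix.mul_fin_three, add_fin3]
  apply fin3_eq <;> ring

lemma hS25 : S 2 5 = M25 := by
  rw [S_succ_succ, hS15, hS24]
  simp only [Apoly, Bpoly, M15, M24, M25, Matrix.mul_fin_three, add_fin3]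
  apply fin3_eq <;> ring

lemma hS31 : S 3 1 = M31 := by
  rw [S_succ_succ, hS21, hS30]
  simp only [Apoly, Bpoly, M21, M30, M31, Matrix.mul_fin_three, add_fin3]
  apply fin3_eq <;> ring

lemma hS32 : S 3 2 = M32 := by
  rw [S_succ_succ, hS22, hS31]
  simp only [Apoly, Bpoly, M22, M31, M32, Matrix.mul_fin_three, add_fin3]
  apply fin3_eq <;> ring

lemma hS33 : S 3 3 = M33 := by
  rw [S_succ_succ, hS23, hS32]
  simp only [Apoly, Bpoly, M23, M32, M33, Matrix.mul_fin_three, add_fin3]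
  apply fin3_eq <;> ring

lemma hS34 : S 3 4 = M34 := by
  rw [S_succ_succ, hS24, hS33]
  simp only [Apoly, Bpoly, M24, M33, M34, Matrix.mul_fin_three, add_fin3]
  apply fin3_eq <;> ring

lemma hS35 : S 3 5 = M35 := by
  rw [S_succ_succ, hS25, hS34]
  simp only [Apoly, Bpoly, M25, M34, M35, Matrix.mul_fin_three, add_fin3]
  apply fin3_eq <;> ring

lemma hS41 : S 4 1 = M41 := by
  rw [S_succ_succ, hS31, hS40]
  simp only [Apoly, Bpoly, M31, M40, M41, Matrix.mul_fin_three, add_fin3]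
  apply fin3_eq <;> ring

lemma hS42 : S 4 2 = M42 := by
  rw [S_succ_succ, hS32, hS41]
  simp only [Apoly, Bpoly, M32, M41, M42, Matrix.mul_fin_three, add_fin3]
  apply fin3_eq <;> ring

lemma hS43 : S 4 3 = M43 := by
  rw [S_succ_succ, hS33, hS42]
  simp only [Apoly, Bpoly, M33, M42, M43, Matrix.mul_fin_three, add_fin3]
  apply fin3_eq <;> ring

lemma hS44 : S 4 4 = M44 := by
  rw [S_succ_succ, hS34, hS43]
  simp only [Apoly, Bpoly, M34, M43, M44, Matrix.mul_fin_three, add_fin3]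
  apply fin3_eq <;> ring

lemma hS45 : S 4 5 = M45 := by
  rw [S_succ_succ, hS35, hS44]
  simp only [Apoly, Bpoly, M35, M44, M45, Matrix.mul_fin_three, add_fin3]
  apply fin3_eq <;> ring

lemma hS51 : S 5 1 = M51 := by
  rw [S_succ_succ, hS41, hS50]
  simp only [Apoly, Bpoly, M41, M50, M51, Matrix.mul_fin_three, add_fin3]
  apply fin3_eq <;> ring

lemma hS52 : S 5 2 = M52 := by
  rw [S_succ_succ, hS42, hS51]
  simp only [Apoly, Bpoly, M42, M51, M52, Matrix.mul_fin_three, add_fin3]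
  apply fin3_eq <;> ring

lemma hS53 : S 5 3 = M53 := by
  rw [S_succ_succ, hS43, hS52]
  simp only [Apoly, Bpoly, M43, M52, M53, Matrix.mul_fin_three, add_fin3]
  apply fin3_eq <;> ring

lemma hS54 : S 5 4 = M54 := by
  rw [S_succ_succ, hS44, hS53]
  simp only [Apoly, Bpoly, M44, M53, M54, Matrix.mul_fin_three, add_fin3]
  apply fin3_eq <;> ring

lemma hS55 : S 5 5 = M55 := by
  rw [S_succ_succ, hS45, hS54]
  simp only [Apoly, Bpoly, M45, M54, M55, Matrix.mul_fin_three, add_fin3]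
  apply fin3_eq <;> ring

theorem stmt_13 :
    ∑ w ∈ words 5 5, T w =
      2 * X ^ 4 *
        (4881 * X ^ 6 + 5930 * X ^ 5 + 4875 * X ^ 4 + 3130 * X ^ 3 + 1675 * X ^ 2 +
          1422 * X + 5) := by
  have h1 : ∑ w ∈ words 5 5, T w = (S 5 5).trace := by
    rw [S, Matrix.trace_sum]; rfl
  rw [h1, hS55]
  simp only [M55, Matrix.trace_fin_three_of]
  ring
end
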